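/- arXiv:2605.15434 — 6 statements merged into one kernel-verified Lean document; each statement's English description precedes it below -/
import Mathlib

section
/- Let $p$ be a prime, let $m$ be a nonzero integer, and let $k > 10\nu_p(m)$ be an integer, where $\nu_p(m)$ is the $p$-adic valuation of $m$. Then the number $N_{p,k}(m)$ of quadruples $(x_1,x_2,x_3,x_4) \in (\mathbb{Z}/p^k\mathbb{Z})^4$ satisfying $x_1 x_2 + x_3 x_4 \equiv m \pmod{p^k}$ equals $p^{3k}\left(1 - \frac{1}{p^2}\right)\left(1 + \frac{1}{p} + \cdots + \frac{1}{p^{\nu_p(m)}}\right)$. -/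
private lemma split2 {α : Type*} [Finite α] (Q R : α → Prop) :
    Nat.card {x // Q x} = Nat.card {x // Q x ∧ R x} + Nat.card {x // Q x ∧ ¬ R x} := by
  classical
  rw [← Nat.card_sum]
  apply Nat.card_congr
  exact (Equiv.sumCompl (fun y : {x // Q x} => R y.1)).symm.trans
    (Equiv.sumCongr (Equiv.subtypeSubtypeEquivSubtypeInter Q R)
      (Equiv.subtypeSubtypeEquivSubtypeInter Q (fun x => ¬ R x)))

private lemma split3 {α : Type*} [Finite α] (Q R S : α → Prop) :
    Nat.card {x // Q x} = Nat.card {x // Q x ∧ R x}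
      + Nat.card {x // Q x ∧ ¬ R x ∧ S x} + Nat.card {x // Q x ∧ ¬ R x ∧ ¬ S x} := by
  rw [split2 Q R, split2 (fun x => Q x ∧ ¬ R x) S, add_assoc]
  congr 2
  · exact Nat.card_congr (Equiv.subtypeEquivRight (by tauto))
  · exact Nat.card_congr (Equiv.subtypeEquivRight (by tauto))

private noncomputable def eqUnit1 {R : Type*} [CommRing R] (m : R) :
    {x : Fin 4 → R // x 0 * x 1 + x 2 * x 3 = m ∧ IsUnit (x 0)} ≃ Rˣ × R × R where
  toFun x := (x.2.2.unit, x.1 2, x.1 3)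
  invFun u := ⟨![u.1, (u.1⁻¹ : Rˣ) * (m - u.2.1 * u.2.2), u.2.1, u.2.2], by
    constructor
    · show (u.1 : R) * ((u.1⁻¹ : Rˣ) * (m - u.2.1 * u.2.2)) + u.2.1 * u.2.2 = m
      rw [← mul_assoc, Units.mul_inv, one_mul]; ring
    · exact u.1.isUnit⟩
  left_inv := by
    rintro ⟨x, hx, hu⟩
    apply Subtype.ext
    funext i
    fin_cases i
    · exact hu.unit_spec
    · show (hu.unit⁻¹ : Rˣ) * (m - x 2 * x 3) = x 1
      rw [← hx]
      simp only [add_sub_cancel_right]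
      rw [show x 0 * x 1 = (hu.unit : R) * x 1 by rw [hu.unit_spec]]
      exact Units.inv_mul_cancel_left _ _
    · rfl
    · rfl
  right_inv u := by
    ext
    · exact rfl
    · rfl
    · rfl

private noncomputable def eqUnit2 {R : Type*} [CommRing R] (m : R) :
    {x : Fin 4 → R // x 0 * x 1 + x 2 * x 3 = m ∧ ¬ IsUnit (x 0) ∧ IsUnit (x 2)}
      ≃ {a : R // ¬ IsUnit a} × R × Rˣ where
  toFun x := (⟨x.1 0, x.2.2.1⟩, x.1 1, x.2.2.2.unit)
  invFun u := ⟨![u.1, u.2.1, u.2.2, (u.2.2⁻¹ : Rˣ) * (m - u.1 * u.2.1)], by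
    refine ⟨?_, u.1.2, u.2.2.isUnit⟩
    show (u.1 : R) * u.2.1 + (u.2.2 : R) * ((u.2.2⁻¹ : Rˣ) * (m - u.1 * u.2.1)) = m
    rw [← mul_assoc, Units.mul_inv, one_mul]; ring⟩
  left_inv := by
    rintro ⟨x, hx, hn, hu⟩
    apply Subtype.ext
    funext i
    fin_cases i
    · rfl
    · rfl
    · exact hu.unit_spec
    · show (hu.unit⁻¹ : Rˣ) * (m - x 0 * x 1) = x 3
      rw [← hx]
      simp only [add_sub_cancel_left]
      rw [show x 2 * x 3 = (hu.unit : R) * x 3 by rw [hu.unit_spec]]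
      exact Units.inv_mul_cancel_left _ _
  right_inv u := by
    refine Prod.ext (Subtype.ext rfl) (Prod.ext rfl ?_)
    ext
    rfl

private lemma zmod_nonunit_iff {p : ℕ} (hp : p.Prime) {k : ℕ} (hk : 0 < k) (x : ZMod (p^k)) :
    ¬ IsUnit x ↔ p ∣ x.val := by
  haveI : NeZero (p^k) := ⟨pow_ne_zero _ hp.ne_zero⟩
  rw [show x = (x.val : ZMod (p^k)) from (ZMod.natCast_rightInverse x).symm]
  rw [ZMod.isUnit_iff_coprime, Nat.coprime_pow_right_iff hk, Nat.coprime_comm,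
    hp.coprime_iff_not_dvd, not_not, ZMod.val_natCast_of_lt (ZMod.val_lt x)]

private lemma key_iff (n : ℕ) (A B C D : ℕ) (m : ℤ) :
    ((A : ZMod n) * (B : ZMod n) + (C : ZMod n) * (D : ZMod n) = (m : ZMod n))
      ↔ ((A : ℤ) * B + (C : ℤ) * D) ≡ m [ZMOD n] := by
  have h : (((A : ℤ) * B + (C : ℤ) * D : ℤ) : ZMod n)
      = (A : ZMod n) * (B : ZMod n) + (C : ZMod n) * (D : ZMod n) := by push_cast; ring
  rw [← h, ZMod.intCast_eq_intCast_iff]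

private lemma eq_iff_int (n : ℕ) [NeZero n] (x : Fin 4 → ZMod n) (m : ℤ) :
    (x 0 * x 1 + x 2 * x 3 = (m : ZMod n)) ↔
      (((x 0).val : ℤ) * (x 1).val + ((x 2).val : ℤ) * (x 3).val) ≡ m [ZMOD n] := by
  have := key_iff n (x 0).val (x 1).val (x 2).val (x 3).val m
  simpa only [ZMod.natCast_val, ZMod.cast_id] using this

private lemma modeq_cancel (p : ℕ) (hp : p.Prime) (K : ℕ) (X m' : ℤ) :
    ((p:ℤ) * X ≡ (p:ℤ) * m' [ZMOD ((p^(K+1) : ℕ) : ℤ)]) ↔ (X ≡ m' [ZMOD ((p^K : ℕ) : ℤ)]) := by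
  rw [Int.modEq_iff_dvd, Int.modEq_iff_dvd]
  have h1 : ((p^(K+1) : ℕ) : ℤ) = (p:ℤ) * ((p^K : ℕ) : ℤ) := by push_cast; ring
  rw [h1, show (p:ℤ)*m' - (p:ℤ)*X = (p:ℤ)*(m' - X) by ring]
  exact mul_dvd_mul_iff_left (by exact_mod_cast hp.ne_zero)

private lemma vec4_eq {α : Type*} {A B C D : α} {x : Fin 4 → α}
    (h0 : A = x 0) (h1 : B = x 1) (h2 : C = x 2) (h3 : D = x 3) : ![A,B,C,D] = x := by
  funext i; fin_cases i
  · exact h0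
  · exact h1
  · exact h2
  · exact h3

private noncomputable def badEquiv (p : ℕ) (hp : p.Prime) (K : ℕ) (m' : ℤ) :
    {x : Fin 4 → ZMod (p^(K+1)) //
        x 0 * x 1 + x 2 * x 3 = ((p * m' : ℤ) : ZMod (p^(K+1))) ∧ ¬IsUnit (x 0) ∧ ¬IsUnit (x 2)}
      ≃ (ZMod p × ZMod p) ×
        {y : Fin 4 → ZMod (p^K) // y 0 * y 1 + y 2 * y 3 = (m' : ZMod (p^K))} where
  toFun x := (((((x.1 1).val / p^K : ℕ) : ZMod p), (((x.1 3).val / p^K : ℕ) : ZMod p)),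
    ⟨![(((x.1 0).val / p : ℕ) : ZMod (p^K)), (((x.1 1).val : ℕ) : ZMod (p^K)),
       (((x.1 2).val / p : ℕ) : ZMod (p^K)), (((x.1 3).val : ℕ) : ZMod (p^K))], by
      obtain ⟨x, hx, hn0, hn2⟩ := x
      haveI : NeZero (p^(K+1)) := ⟨pow_ne_zero _ hp.ne_zero⟩
      have ha : p ∣ (x 0).val := (zmod_nonunit_iff hp (Nat.succ_pos K) _).mp hn0
      have hc : p ∣ (x 2).val := (zmod_nonunit_iff hp (Nat.succ_pos K) _).mp hn2
      have hx' := (eq_iff_int _ x (p * m')).mp hx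
      show (((x 0).val / p : ℕ) : ZMod (p^K)) * (((x 1).val : ℕ) : ZMod (p^K))
          + (((x 2).val / p : ℕ) : ZMod (p^K)) * (((x 3).val : ℕ) : ZMod (p^K))
          = (m' : ZMod (p^K))
      rw [key_iff]
      have key : (p:ℤ) * ((((x 0).val / p : ℕ) : ℤ) * (x 1).val
          + (((x 2).val / p : ℕ) : ℤ) * (x 3).val)
          = ((x 0).val : ℤ) * (x 1).val + ((x 2).val : ℤ) * (x 3).val := by
        obtain ⟨a', hA⟩ := ha
        obtain ⟨c', hC⟩ := hc
        rw [hA, hC, Nat.mul_div_cancel_left _ hp.pos, Nat.mul_div_cancel_left _ hp.pos]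
        push_cast; ring
      rw [← modeq_cancel p hp K _ m', key]
      exact hx'⟩)
  invFun cdy := ⟨![((p * (cdy.2.1 0).val : ℕ) : ZMod (p^(K+1))),
      (((cdy.2.1 1).val + p^K * cdy.1.1.val : ℕ) : ZMod (p^(K+1))),
      ((p * (cdy.2.1 2).val : ℕ) : ZMod (p^(K+1))),
      (((cdy.2.1 3).val + p^K * cdy.1.2.val : ℕ) : ZMod (p^(K+1)))], by
    obtain ⟨⟨c, d⟩, y, hy⟩ := cdy
    haveI : NeZero (p^(K+1)) := ⟨pow_ne_zero _ hp.ne_zero⟩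
    haveI : NeZero (p^K) := ⟨pow_ne_zero _ hp.ne_zero⟩
    refine ⟨?_, ?_, ?_⟩
    · show ((p * (y 0).val : ℕ) : ZMod (p^(K+1))) * (((y 1).val + p^K * c.val : ℕ) : ZMod (p^(K+1)))
        + ((p * (y 2).val : ℕ) : ZMod (p^(K+1))) * (((y 3).val + p^K * d.val : ℕ) : ZMod (p^(K+1)))
        = ((p * m' : ℤ) : ZMod (p^(K+1)))
      rw [key_iff]
      have hy' := (eq_iff_int _ y m').mp hy
      have h2 : (p:ℤ) * (((y 0).val : ℤ) * (y 1).val + ((y 2).val : ℤ) * (y 3).val)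
          ≡ (p:ℤ) * m' [ZMOD ((p^(K+1) : ℕ) : ℤ)] := (modeq_cancel p hp K _ m').mpr hy'
      have h3 : ((p * (y 0).val : ℕ) : ℤ) * ((y 1).val + p^K * c.val : ℕ)
          + ((p * (y 2).val : ℕ) : ℤ) * ((y 3).val + p^K * d.val : ℕ)
          ≡ (p:ℤ) * (((y 0).val : ℤ) * (y 1).val + ((y 2).val : ℤ) * (y 3).val)
            [ZMOD ((p^(K+1) : ℕ) : ℤ)] := by
        rw [Int.modEq_iff_dvd]
        refine ⟨-(((y 0).val : ℤ) * c.val + ((y 2).val : ℤ) * d.val), ?_⟩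
        push_cast; ring
      calc _ ≡ _ [ZMOD ((p^(K+1) : ℕ) : ℤ)] := h3
        _ ≡ (p:ℤ) * m' [ZMOD ((p^(K+1) : ℕ) : ℤ)] := by exact_mod_cast h2
    · show ¬IsUnit (((p * (y 0).val : ℕ) : ZMod (p^(K+1))))
      rw [zmod_nonunit_iff hp (Nat.succ_pos K)]
      rw [ZMod.val_natCast_of_lt]
      · exact Dvd.intro _ rfl
      · calc p * (y 0).val < p * p^K := (Nat.mul_lt_mul_left hp.pos).mpr (ZMod.val_lt _)
          _ = p^(K+1) := by ring
    · show ¬IsUnit (((p * (y 2).val : ℕ) : ZMod (p^(K+1))))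
      rw [zmod_nonunit_iff hp (Nat.succ_pos K)]
      rw [ZMod.val_natCast_of_lt]
      · exact Dvd.intro _ rfl
      · calc p * (y 2).val < p * p^K := (Nat.mul_lt_mul_left hp.pos).mpr (ZMod.val_lt _)
          _ = p^(K+1) := by ring⟩
  left_inv := by
    rintro ⟨x, hx, hn0, hn2⟩
    haveI : NeZero (p^(K+1)) := ⟨pow_ne_zero _ hp.ne_zero⟩
    haveI : NeZero (p^K) := ⟨pow_ne_zero _ hp.ne_zero⟩
    haveI : NeZero p := ⟨hp.ne_zero⟩
    have ha : p ∣ (x 0).val := (zmod_nonunit_iff hp (Nat.succ_pos K) _).mp hn0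
    have hc : p ∣ (x 2).val := (zmod_nonunit_iff hp (Nat.succ_pos K) _).mp hn2
    apply Subtype.ext
    apply vec4_eq
    · -- p * val(cast (val x0 / p)) ↦ x 0
      show ((p * ((((x 0).val / p : ℕ) : ZMod (p^K))).val : ℕ) : ZMod (p^(K+1))) = x 0
      have hlt : (x 0).val / p < p^K := by
        rw [Nat.div_lt_iff_lt_mul hp.pos]
        calc (x 0).val < p^(K+1) := ZMod.val_lt _
          _ = p^K * p := by ring
      rw [ZMod.val_natCast_of_lt hlt, Nat.mul_div_cancel' ha]
      exact ZMod.natCast_rightInverse _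
    · show (((((x 1).val : ℕ) : ZMod (p^K)).val
          + p^K * ((((x 1).val / p^K : ℕ) : ZMod p)).val : ℕ) : ZMod (p^(K+1))) = x 1
      have hlt : (x 1).val / p^K < p := by
        rw [Nat.div_lt_iff_lt_mul (pow_pos hp.pos K)]
        calc (x 1).val < p^(K+1) := ZMod.val_lt _
          _ = p * p^K := by ring
      rw [ZMod.val_natCast, ZMod.val_natCast_of_lt hlt, Nat.mod_add_div]
      exact ZMod.natCast_rightInverse _
    · show ((p * ((((x 2).val / p : ℕ) : ZMod (p^K))).val : ℕ) : ZMod (p^(K+1))) = x 2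
      have hlt : (x 2).val / p < p^K := by
        rw [Nat.div_lt_iff_lt_mul hp.pos]
        calc (x 2).val < p^(K+1) := ZMod.val_lt _
          _ = p^K * p := by ring
      rw [ZMod.val_natCast_of_lt hlt, Nat.mul_div_cancel' hc]
      exact ZMod.natCast_rightInverse _
    · show (((((x 3).val : ℕ) : ZMod (p^K)).val
          + p^K * ((((x 3).val / p^K : ℕ) : ZMod p)).val : ℕ) : ZMod (p^(K+1))) = x 3
      have hlt : (x 3).val / p^K < p := by
        rw [Nat.div_lt_iff_lt_mul (pow_pos hp.pos K)]
        calc (x 3).val < p^(K+1) := ZMod.val_lt _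
          _ = p * p^K := by ring
      rw [ZMod.val_natCast, ZMod.val_natCast_of_lt hlt, Nat.mod_add_div]
      exact ZMod.natCast_rightInverse _
  right_inv := by
    rintro ⟨⟨c, d⟩, y, hy⟩
    haveI : NeZero (p^(K+1)) := ⟨pow_ne_zero _ hp.ne_zero⟩
    haveI : NeZero (p^K) := ⟨pow_ne_zero _ hp.ne_zero⟩
    haveI : NeZero p := ⟨hp.ne_zero⟩
    have hB1 : (y 1).val + p^K * c.val < p^(K+1) := by
      have h1 : (y 1).val < p^K := ZMod.val_lt _
      have h2 : c.val < p := ZMod.val_lt _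
      calc (y 1).val + p^K * c.val < p^K + p^K * c.val := by omega
        _ = p^K * (c.val + 1) := by ring
        _ ≤ p^K * p := Nat.mul_le_mul_left _ (by omega)
        _ = p^(K+1) := by ring
    have hB3 : (y 3).val + p^K * d.val < p^(K+1) := by
      have h1 : (y 3).val < p^K := ZMod.val_lt _
      have h2 : d.val < p := ZMod.val_lt _
      calc (y 3).val + p^K * d.val < p^K + p^K * d.val := by omega
        _ = p^K * (d.val + 1) := by ring
        _ ≤ p^K * p := Nat.mul_le_mul_left _ (by omega)
        _ = p^(K+1) := by ring
    have hA0 : p * (y 0).val < p^(K+1) := by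
      calc p * (y 0).val < p * p^K := (Nat.mul_lt_mul_left hp.pos).mpr (ZMod.val_lt _)
        _ = p^(K+1) := by ring
    have hA2 : p * (y 2).val < p^(K+1) := by
      calc p * (y 2).val < p * p^K := (Nat.mul_lt_mul_left hp.pos).mpr (ZMod.val_lt _)
        _ = p^(K+1) := by ring
    simp only [Prod.mk.injEq]
    refine ⟨⟨?_, ?_⟩, Subtype.ext (vec4_eq ?_ ?_ ?_ ?_)⟩
    · show (((((y 1).val + p^K * c.val : ℕ) : ZMod (p^(K+1))).val / p^K : ℕ) : ZMod p) = c
      rw [ZMod.val_natCast_of_lt hB1, Nat.add_mul_div_left _ _ (pow_pos hp.pos K),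
        Nat.div_eq_of_lt (ZMod.val_lt _), zero_add]
      exact ZMod.natCast_rightInverse _
    · show (((((y 3).val + p^K * d.val : ℕ) : ZMod (p^(K+1))).val / p^K : ℕ) : ZMod p) = d
      rw [ZMod.val_natCast_of_lt hB3, Nat.add_mul_div_left _ _ (pow_pos hp.pos K),
        Nat.div_eq_of_lt (ZMod.val_lt _), zero_add]
      exact ZMod.natCast_rightInverse _
    · show ((((p * (y 0).val : ℕ) : ZMod (p^(K+1))).val / p : ℕ) : ZMod (p^K)) = y 0
      rw [ZMod.val_natCast_of_lt hA0, Nat.mul_div_cancel_left _ hp.pos]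
      exact ZMod.natCast_rightInverse _
    · show (((((y 1).val + p^K * c.val : ℕ) : ZMod (p^(K+1))).val : ℕ) : ZMod (p^K)) = y 1
      rw [ZMod.val_natCast_of_lt hB1, Nat.cast_add, Nat.cast_mul,
        show ((p^K : ℕ) : ZMod (p^K)) = 0 from ZMod.natCast_self _, zero_mul, add_zero]
      exact ZMod.natCast_rightInverse _
    · show ((((p * (y 2).val : ℕ) : ZMod (p^(K+1))).val / p : ℕ) : ZMod (p^K)) = y 2
      rw [ZMod.val_natCast_of_lt hA2, Nat.mul_div_cancel_left _ hp.pos]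
      exact ZMod.natCast_rightInverse _
    · show (((((y 3).val + p^K * d.val : ℕ) : ZMod (p^(K+1))).val : ℕ) : ZMod (p^K)) = y 3
      rw [ZMod.val_natCast_of_lt hB3, Nat.cast_add, Nat.cast_mul,
        show ((p^K : ℕ) : ZMod (p^K)) = 0 from ZMod.natCast_self _, zero_mul, add_zero]
      exact ZMod.natCast_rightInverse _

private noncomputable def nonunitEquiv (p : ℕ) (hp : p.Prime) (K : ℕ) :
    {a : ZMod (p^(K+1)) // ¬ IsUnit a} ≃ ZMod (p^K) where
  toFun a := ((a.1.val / p : ℕ) : ZMod (p^K))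
  invFun b := ⟨((p * b.val : ℕ) : ZMod (p^(K+1))), by
    haveI : NeZero (p^K) := ⟨pow_ne_zero _ hp.ne_zero⟩
    rw [zmod_nonunit_iff hp (Nat.succ_pos K)]
    rw [ZMod.val_natCast_of_lt]
    · exact Dvd.intro _ rfl
    · calc p * b.val < p * p^K := by
            have := ZMod.val_lt b
            exact (Nat.mul_lt_mul_left hp.pos).mpr this
        _ = p^(K+1) := by ring⟩
  left_inv a := by
    haveI : NeZero (p^(K+1)) := ⟨pow_ne_zero _ hp.ne_zero⟩
    haveI : NeZero (p^K) := ⟨pow_ne_zero _ hp.ne_zero⟩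
    apply Subtype.ext
    have hdvd : p ∣ a.1.val := (zmod_nonunit_iff hp (Nat.succ_pos K) a.1).mp a.2
    have hlt : a.1.val / p < p^K := by
      rw [Nat.div_lt_iff_lt_mul hp.pos]
      calc a.1.val < p^(K+1) := ZMod.val_lt a.1
        _ = p^K * p := by ring
    show ((p * (((a.1.val / p : ℕ) : ZMod (p^K))).val : ℕ) : ZMod (p^(K+1))) = a.1
    rw [ZMod.val_natCast_of_lt hlt, Nat.mul_div_cancel' hdvd]
    exact ZMod.natCast_rightInverse a.1
  right_inv b := by
    haveI : NeZero (p^(K+1)) := ⟨pow_ne_zero _ hp.ne_zero⟩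
    haveI : NeZero (p^K) := ⟨pow_ne_zero _ hp.ne_zero⟩
    have hlt : p * b.val < p^(K+1) := by
      calc p * b.val < p * p^K := (Nat.mul_lt_mul_left hp.pos).mpr (ZMod.val_lt b)
        _ = p^(K+1) := by ring
    show ((((p * b.val : ℕ) : ZMod (p^(K+1))).val / p : ℕ) : ZMod (p^K)) = b
    rw [ZMod.val_natCast_of_lt hlt, Nat.mul_div_cancel_left _ hp.pos]
    exact ZMod.natCast_rightInverse b

private lemma card_units_pow (p : ℕ) (hp : p.Prime) (K : ℕ) :
    Nat.card (ZMod (p^(K+1)))ˣ = p^K * (p - 1) := by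
  haveI : NeZero (p^(K+1)) := ⟨pow_ne_zero _ hp.ne_zero⟩
  rw [Nat.card_eq_fintype_card, ZMod.card_units_eq_totient,
    Nat.totient_prime_pow hp (Nat.succ_pos K)]
  simp

private lemma card_strat (p : ℕ) (hp : p.Prime) (K : ℕ) (m : ℤ) :
    Nat.card {x : Fin 4 → ZMod (p^(K+1)) // x 0 * x 1 + x 2 * x 3 = (m : ZMod (p^(K+1)))}
      = (p^K * (p-1)) * (p^(K+1) * p^(K+1))
        + p^K * (p^(K+1) * (p^K * (p-1)))
        + Nat.card {x : Fin 4 → ZMod (p^(K+1)) //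
            (x 0 * x 1 + x 2 * x 3 = (m : ZMod (p^(K+1)))) ∧ ¬IsUnit (x 0) ∧ ¬IsUnit (x 2)} := by
  haveI : NeZero (p^(K+1)) := ⟨pow_ne_zero _ hp.ne_zero⟩
  rw [split3 (fun x : Fin 4 → ZMod (p^(K+1)) => x 0 * x 1 + x 2 * x 3 = (m : ZMod (p^(K+1))))
    (fun x => IsUnit (x 0)) (fun x => IsUnit (x 2))]
  congr 2
  · rw [Nat.card_congr (eqUnit1 (m : ZMod (p^(K+1)))), Nat.card_prod, Nat.card_prod,
      Nat.card_zmod, card_units_pow p hp K]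
  · rw [Nat.card_congr (eqUnit2 (m : ZMod (p^(K+1)))), Nat.card_prod, Nat.card_prod,
      Nat.card_zmod, card_units_pow p hp K,
      Nat.card_congr (nonunitEquiv p hp K), Nat.card_zmod]

private lemma key_count (p : ℕ) (hp : p.Prime) :
    ∀ (t : ℕ) (m : ℤ), m ≠ 0 → padicValInt p m = t → ∀ K : ℕ, t < K + 1 →
    (Nat.card {x : Fin 4 → ZMod (p^(K+1)) //
        x 0 * x 1 + x 2 * x 3 = (m : ZMod (p^(K+1)))} : ℚ)
      = (p : ℚ) ^ (3*(K+1)) * (1 - 1/(p:ℚ)^2)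
        * (∑ j ∈ Finset.range (t+1), (1/(p:ℚ))^j) := by
  haveI := Fact.mk hp
  have hp0 : (p:ℚ) ≠ 0 := by exact_mod_cast hp.ne_zero
  intro t
  induction t with
  | zero =>
    intro m hm hv K hK
    rw [card_strat p hp K m]
    have hbad : Nat.card {x : Fin 4 → ZMod (p^(K+1)) //
        (x 0 * x 1 + x 2 * x 3 = (m : ZMod (p^(K+1)))) ∧ ¬IsUnit (x 0) ∧ ¬IsUnit (x 2)} = 0 := by
      rw [Nat.card_eq_zero]
      refine Or.inl ⟨?_⟩
      rintro ⟨x, hx, hn0, hn2⟩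
      haveI : NeZero (p^(K+1)) := ⟨pow_ne_zero _ hp.ne_zero⟩
      have ha : p ∣ (x 0).val := (zmod_nonunit_iff hp (Nat.succ_pos K) _).mp hn0
      have hc : p ∣ (x 2).val := (zmod_nonunit_iff hp (Nat.succ_pos K) _).mp hn2
      have hx' := (eq_iff_int _ x m).mp hx
      have hdvd : (p:ℤ) ∣ m := by
        have h1 : ((p^(K+1):ℕ) : ℤ)
            ∣ m - (((x 0).val : ℤ) * (x 1).val + ((x 2).val : ℤ) * (x 3).val) :=
          Int.modEq_iff_dvd.mp hx'
        have h2 : (p:ℤ) ∣ ((p^(K+1):ℕ) : ℤ) := by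
          push_cast; exact dvd_pow_self _ (Nat.succ_ne_zero K)
        have h3 : (p:ℤ) ∣ (((x 0).val : ℤ) * (x 1).val + ((x 2).val : ℤ) * (x 3).val) := by
          obtain ⟨a', hA⟩ := ha; obtain ⟨c', hC⟩ := hc
          refine ⟨a' * (x 1).val + c' * (x 3).val, ?_⟩
          push_cast [hA, hC]; ring
        have h4 := dvd_add (h2.trans h1) h3
        simpa using h4
      have h5 : 1 ≤ padicValInt p m := by
        rcases (padicValInt_dvd_iff 1 m).mp (by simpa using hdvd) with h | h
        · exact absurd h hm
        · exact h
      omega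
    simp only [hbad]
    push_cast [Nat.cast_sub hp.one_lt.le]
    simp only [Finset.range_one, Finset.sum_singleton, pow_zero]
    field_simp
    ring
  | succ s ih =>
    intro m hm hv K hK
    obtain ⟨K', rfl⟩ : ∃ K', K = K' + 1 := ⟨K - 1, by omega⟩
    have hdvd : (p:ℤ) ∣ m := by
      have h := (padicValInt_dvd_iff 1 m).mpr (Or.inr (by rw [hv]; omega))
      simpa using h
    obtain ⟨m', rfl⟩ := hdvd
    have hm' : m' ≠ 0 := by rintro rfl; simp at hm
    have hv' : padicValInt p m' = s := by
      rw [padicValInt.mul (by exact_mod_cast hp.ne_zero) hm', padicValInt_self] at hv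
      omega
    have hbad : Nat.card {x : Fin 4 → ZMod (p^(K'+1+1)) //
        (x 0 * x 1 + x 2 * x 3 = (((p:ℤ) * m' : ℤ) : ZMod (p^(K'+1+1))))
          ∧ ¬IsUnit (x 0) ∧ ¬IsUnit (x 2)}
        = p * (p * Nat.card {y : Fin 4 → ZMod (p^(K'+1)) //
            y 0 * y 1 + y 2 * y 3 = (m' : ZMod (p^(K'+1)))}) := by
      rw [Nat.card_congr (badEquiv p hp (K'+1) m'), Nat.card_prod, Nat.card_prod,
        Nat.card_zmod, mul_assoc]
    rw [card_strat p hp (K'+1) ((p:ℤ) * m')]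
    simp only [hbad]
    have IH := ih m' hm' hv' K' (Nat.lt_of_succ_lt_succ hK)
    push_cast [Nat.cast_sub hp.one_lt.le]
    rw [show (∑ j ∈ Finset.range (s+1+1), (1/(p:ℚ))^j)
        = 1/(p:ℚ) * (∑ j ∈ Finset.range (s+1), (1/(p:ℚ))^j) + 1 from
      geom_sum_succ, IH]
    set S := ∑ j ∈ Finset.range (s+1), (1/(p:ℚ))^j with hS
    field_simp
    ring

theorem local_density_count (p : ℕ) (hp : p.Prime) (m : ℤ) (hm : m ≠ 0)
    (k : ℕ) (hk : 10 * padicValInt p m < k) :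
    (Nat.card {x : Fin 4 → ZMod (p ^ k) //
        x 0 * x 1 + x 2 * x 3 = (m : ZMod (p ^ k))} : ℚ)
      = (p : ℚ) ^ (3 * k) * (1 - 1 / (p : ℚ) ^ 2) *
        (∑ j ∈ Finset.range (padicValInt p m + 1), (1 / (p : ℚ)) ^ j) := by
  obtain ⟨K, rfl⟩ : ∃ K, k = K + 1 := ⟨k - 1, by omega⟩
  exact key_count p hp (padicValInt p m) m hm rfl K (by omega)
end

section
/- For every nonzero integer $h$, the product over all primes $p$ of $\left(1 - \frac{1}{p^2}\right)\left(\sum_{j=0}^{\nu_p(h)} p^{-j}\right)$ converges and equals $\frac{1}{\zeta(2)} \sum_{d \mid h} \frac{1}{d}$. -/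
open ArithmeticFunction Finset
open scoped ArithmeticFunction.Moebius ArithmeticFunction.zeta

theorem singular_series_product (h : ℤ) (hh : h ≠ 0) :
    Multipliable (fun p : Nat.Primes =>
      (1 - 1 / (p : ℝ) ^ 2) * ∑ j ∈ Finset.range (padicValInt p h + 1), ((p : ℝ))⁻¹ ^ j) ∧
    ((∏' p : Nat.Primes,
        (1 - 1 / (p : ℝ) ^ 2) * ∑ j ∈ Finset.range (padicValInt p h + 1), ((p : ℝ))⁻¹ ^ j : ℝ) : ℂ)
      = (riemannZeta 2)⁻¹ * ∑ d ∈ h.natAbs.divisors, 1 / (d : ℂ) := by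
  classical
  have hn : h.natAbs ≠ 0 := Int.natAbs_ne_zero.mpr hh
  set n := h.natAbs with hndef
  -- The real Möbius function divided by m².
  set f : ℕ → ℝ := fun m => (μ m : ℝ) / (m : ℝ) ^ 2 with hfdef
  have hf1 : f 1 = 1 := by simp [hfdef]
  have hmul : ∀ {m k : ℕ}, Nat.Coprime m k → f (m * k) = f m * f k := by
    intro m k hmk
    have hμ := isMultiplicative_moebius.map_mul_of_coprime hmk
    simp only [hfdef]
    rw [hμ]
    push_cast
    ring
  have hsum : Summable (fun m => ‖f m‖) := by
    have h2 : Summable (fun m : ℕ => 1 / (m : ℝ) ^ 2) := by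
      simpa using Real.summable_one_div_nat_pow.mpr one_lt_two
    refine Summable.of_nonneg_of_le (fun m => norm_nonneg _) (fun m => ?_) h2
    rcases Nat.eq_zero_or_pos m with rfl | hm
    · simp [hfdef]
    · have h1 : |(μ m : ℝ)| ≤ 1 := by
        have := abs_moebius_le_one (n := m)
        exact_mod_cast (by exact_mod_cast this : (|μ m| : ℤ) ≤ 1)
      have hm2 : (0:ℝ) < (m : ℝ) ^ 2 := by positivity
      simp only [hfdef, Real.norm_eq_abs, abs_div, abs_pow, Nat.abs_cast, one_div]
      rw [div_le_iff₀ hm2, inv_mul_cancel₀ hm2.ne']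
      exact h1
  have hf0 : f 0 = 0 := by simp [hfdef]
  have hEuler := EulerProduct.eulerProduct_hasProd hf1 hmul hsum hf0
  have hfac : (fun p : Nat.Primes => ∑' e : ℕ, f ((p : ℕ) ^ e))
      = fun p : Nat.Primes => 1 - 1 / (p : ℝ) ^ 2 := by
    funext p
    have hp : (p : ℕ).Prime := p.2
    have hzero : ∀ e ∉ Finset.range 2, f ((p : ℕ) ^ e) = 0 := by
      intro e he
      have he2 : e ≠ 0 := by rintro rfl; simp at he
      have he1 : e ≠ 1 := by rintro rfl; simp at he
      have : μ ((p : ℕ) ^ e) = 0 := by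
        rw [moebius_apply_prime_pow hp he2, if_neg he1]
      simp [hfdef, this]
    rw [tsum_eq_sum hzero]
    have : ∑ e ∈ Finset.range 2, f ((p : ℕ) ^ e) = f 1 + f (p : ℕ) := by
      rw [Finset.sum_range_succ, Finset.sum_range_one, pow_zero, pow_one]
    rw [this, hf1]
    simp only [hfdef, moebius_apply_prime hp]
    push_cast
    ring
  rw [hfac] at hEuler
  set T : ℝ := ∑' m, f m with hTdef
  -- the finite correction factor
  set c : Nat.Primes → ℝ :=
    fun p => ∑ j ∈ Finset.range (padicValInt p h + 1), ((p : ℝ))⁻¹ ^ j with hcdef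
  set s : Finset Nat.Primes := n.primeFactors.attach.map
    ⟨fun q => ⟨q.1, Nat.prime_of_mem_primeFactors q.2⟩,
     by intro a b hab; exact Subtype.ext (Subtype.mk_eq_mk.mp hab)⟩ with hsdef
  have hcs : ∀ p : Nat.Primes, p ∉ s → c p = 1 := by
    intro p hp
    have hpn : ¬ (p : ℕ) ∣ n := by
      intro hdvd
      apply hp
      rw [hsdef]
      simp only [Finset.mem_map, Finset.mem_attach, true_and]
      exact ⟨⟨(p : ℕ), Nat.mem_primeFactors.mpr ⟨p.2, hdvd, hn⟩⟩, Subtype.ext rfl⟩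
    have hval : padicValInt (p : ℕ) h = 0 := by
      unfold padicValInt
      exact padicValNat.eq_zero_of_not_dvd hpn
    simp [hcdef, hval]
  have hc : HasProd c (∏ p ∈ s, c p) := hasProd_prod_of_ne_finset_one hcs
  have hmain : HasProd (fun p : Nat.Primes => (1 - 1 / (p : ℝ) ^ 2) * c p) (T * ∏ p ∈ s, c p) :=
    hEuler.mul hc
  refine ⟨hmain.multipliable, ?_⟩
  rw [hmain.tprod_eq, Complex.ofReal_mul]
  -- identify T with ζ(2)⁻¹
  have hT : (T : ℂ) = (riemannZeta 2)⁻¹ := by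
    have hre : 1 < (2 : ℂ).re := by norm_num
    have hLμ : LSeries (fun m => (μ m : ℂ)) 2 = ∑' m, (f m : ℂ) := by
      unfold LSeries
      congr 1
      funext m
      rcases Nat.eq_zero_or_pos m with rfl | hm
      · simp [hfdef, LSeries.term_zero]
      · rw [LSeries.term_of_ne_zero hm.ne']
        have : (m : ℂ) ^ (2 : ℂ) = (m : ℂ) ^ (2 : ℕ) := by
          exact_mod_cast Complex.cpow_natCast (m : ℂ) 2
        rw [this]
        simp [hfdef]
    have h1 : riemannZeta 2 * LSeries (fun m => (μ m : ℂ)) 2 = 1 := by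
      have := LSeries_one_mul_Lseries_moebius hre
      rwa [LSeries_one_eq_riemannZeta hre] at this
    have hz : riemannZeta 2 ≠ 0 := riemannZeta_ne_zero_of_one_lt_re hre
    rw [hTdef, Complex.ofReal_tsum, ← hLμ]
    field_simp
    linear_combination h1
  rw [hT]
  congr 1
  -- identify the finite product with the divisor sum
  set g : ArithmeticFunction ℂ := ⟨fun d => (d : ℂ)⁻¹, by simp⟩ with hgdef
  have hg : g.IsMultiplicative := by
    constructor
    · simp [hgdef]
    · intro m k hmk
      simp [hgdef, mul_inv, mul_comm]
  have hF : (↑ζ * g : ArithmeticFunction ℂ).IsMultiplicative :=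
    isMultiplicative_zeta.natCast.mul hg
  have hRHS : ∑ d ∈ n.divisors, 1 / (d : ℂ) = (↑ζ * g : ArithmeticFunction ℂ) n := by
    rw [coe_zeta_mul_apply]
    simp [hgdef, one_div]
  rw [hRHS, hF.multiplicative_factorization _ hn, Finsupp.prod, Nat.support_factorization,
    ← Finset.prod_attach n.primeFactors
      (fun q => (↑ζ * g : ArithmeticFunction ℂ) (q ^ n.factorization q))]
  rw [Complex.ofReal_prod, hsdef, Finset.prod_map]
  refine Finset.prod_congr rfl fun q _ => ?_
  have hq : (q : ℕ).Prime := Nat.prime_of_mem_primeFactors q.2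
  have hval : padicValInt ((q : ℕ)) h = n.factorization (q : ℕ) := by
    rw [Nat.factorization_def n hq]
    rfl
  simp only [hcdef, Function.Embedding.coeFn_mk, hval]
  rw [Complex.ofReal_sum, coe_zeta_mul_apply, Nat.sum_divisors_prime_pow hq]
  refine Finset.sum_congr (congrArg (fun t => Finset.range (t + 1)) hval) fun j _ => ?_
  simp only [hgdef, ArithmeticFunction.coe_mk]
  push_cast
  rw [inv_pow]
  rfl
end

section
/- Define $J(\lambda) = \int_0^1 \int_0^1 \frac{1}{\alpha\beta} \mu\big((0,\beta] \cap (\lambda - (0,\alpha])\big)\, d\alpha\, d\beta$ where $\mu$ is Lebesgue measure on $\mathbb{R}$. Then for all $0 < \lambda < 2$ the integral converges and satisfies $0 < J(\lambda) \leq 4$, and $J(\lambda) = 0$ for $\lambda \notin (0,2)$. -/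
open MeasureTheory Set intervalIntegral

noncomputable def Jfun (lam : ℝ) : ℝ × ℝ → ℝ := fun p =>
  (volume (Set.Ioc (0:ℝ) p.2 ∩ (fun t => lam - t) '' Set.Ioc (0:ℝ) p.1)).toReal / (p.1 * p.2)

lemma vol_formula (lam a b : ℝ) :
    (volume (Set.Ioc (0:ℝ) b ∩ (fun t => lam - t) '' Set.Ioc (0:ℝ) a)).toReal
      = max (min b lam - max 0 (lam - a)) 0 := by
  rw [Set.image_const_sub_Ioc, sub_zero]
  set M := max 0 (lam - a) with hM
  set R := min b lam with hR
  have h1 : Set.Ioo M R ⊆ Set.Ioc 0 b ∩ Set.Ico (lam - a) lam := by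
    intro x hx
    have hM0 : (0:ℝ) ≤ M := le_max_left _ _
    have hMa : lam - a ≤ M := le_max_right _ _
    have hRb : R ≤ b := min_le_left _ _
    have hRl : R ≤ lam := min_le_right _ _
    exact ⟨⟨lt_of_le_of_lt hM0 hx.1, le_of_lt (hx.2.trans_le hRb)⟩,
      ⟨hMa.trans hx.1.le, hx.2.trans_le hRl⟩⟩
  have h2 : Set.Ioc 0 b ∩ Set.Ico (lam - a) lam ⊆ Set.Icc M R := by
    intro x hx
    exact ⟨max_le hx.1.1.le hx.2.1, le_min hx.1.2 hx.2.2.le⟩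
  have hv : volume (Set.Ioc 0 b ∩ Set.Ico (lam - a) lam) = ENNReal.ofReal (R - M) := by
    refine le_antisymm ?_ ?_
    · exact (measure_mono h2).trans_eq (Real.volume_Icc)
    · calc ENNReal.ofReal (R - M) = volume (Set.Ioo M R) := (Real.volume_Ioo).symm
        _ ≤ _ := measure_mono h1
  rw [hv, ENNReal.toReal_ofReal']

lemma Jfun_eq (lam : ℝ) : Jfun lam
    = fun p => max (min p.2 lam - max 0 (lam - p.1)) 0 / (p.1 * p.2) :=
  funext fun p => by rw [Jfun, vol_formula]

lemma Jfun_measurable (lam : ℝ) : Measurable (Jfun lam) := by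
  rw [Jfun_eq]
  apply Measurable.div
  · exact (((continuous_snd.min continuous_const).sub
      (continuous_const.max (continuous_const.sub continuous_fst))).max continuous_const).measurable
  · exact (continuous_fst.mul continuous_snd).measurable

lemma Jfun_nonneg (lam : ℝ) {p : ℝ × ℝ} (h1 : 0 < p.1) (h2 : 0 < p.2) :
    0 ≤ Jfun lam p := by
  rw [Jfun_eq]
  exact div_nonneg (le_max_right _ _) (by positivity)

-- the sqrt bound
lemma Jfun_le (lam : ℝ) {p : ℝ × ℝ} (h1 : 0 < p.1) (h2 : 0 < p.2) :
    Jfun lam p ≤ (Real.sqrt p.1)⁻¹ * (Real.sqrt p.2)⁻¹ := by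
  obtain ⟨a, b⟩ := p
  simp only at h1 h2 ⊢
  rw [Jfun_eq]
  simp only
  have hsa : 0 < Real.sqrt a := Real.sqrt_pos.2 h1
  have hsb : 0 < Real.sqrt b := Real.sqrt_pos.2 h2
  have ha' : Real.sqrt a * Real.sqrt a = a := Real.mul_self_sqrt h1.le
  have hb' : Real.sqrt b * Real.sqrt b = b := Real.mul_self_sqrt h2.le
  have hN : max (min b lam - max 0 (lam - a)) 0 ≤ Real.sqrt a * Real.sqrt b := by
    have hmin : min a b ≤ Real.sqrt a * Real.sqrt b := by
      rcases le_total a b with h | h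
      · calc min a b ≤ a := min_le_left _ _
          _ = Real.sqrt a * Real.sqrt a := ha'.symm
          _ ≤ Real.sqrt a * Real.sqrt b := by
              exact mul_le_mul_of_nonneg_left (Real.sqrt_le_sqrt h) hsa.le
      · calc min a b ≤ b := min_le_right _ _
          _ = Real.sqrt b * Real.sqrt b := hb'.symm
          _ ≤ Real.sqrt a * Real.sqrt b := by
              exact mul_le_mul_of_nonneg_right (Real.sqrt_le_sqrt h) hsb.le
    refine le_trans (max_le ?_ (le_trans (le_min h1.le h2.le) hmin)) le_rfl
    have h3 : min b lam - max 0 (lam - a) ≤ a := by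
      have := min_le_right b lam
      have := le_max_right 0 (lam - a)
      linarith
    have h4 : min b lam - max 0 (lam - a) ≤ b := by
      have := min_le_left b lam
      have := le_max_left 0 (lam - a)
      linarith
    exact le_trans (le_min h3 h4) hmin
  rw [div_le_iff₀ (by positivity)]
  calc max (min b lam - max 0 (lam - a)) 0 ≤ Real.sqrt a * Real.sqrt b := hN
    _ = (Real.sqrt a)⁻¹ * (Real.sqrt b)⁻¹ * (a * b) := by
        field_simp
        linear_combination Real.sqrt b ^ 2 * ha' + a * hb'

-- 1-D integrability and integral
lemma oneD_integrable : IntegrableOn (fun x : ℝ => (Real.sqrt x)⁻¹) (Set.Ioo 0 1) volume := by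
  have h : IntervalIntegrable (fun x : ℝ => x ^ (-(1:ℝ)/2)) volume 0 1 :=
    intervalIntegrable_rpow' (by norm_num)
  have h2 : IntegrableOn (fun x : ℝ => x ^ (-(1:ℝ)/2)) (Set.Ioc 0 1) volume :=
    (intervalIntegrable_iff_integrableOn_Ioc_of_le zero_le_one).mp h
  have h3 := h2.mono_set Set.Ioo_subset_Ioc_self
  refine h3.congr_fun ?_ measurableSet_Ioo
  intro x hx
  simp only
  rw [show (-(1:ℝ)/2) = -(1/2:ℝ) by ring, Real.rpow_neg hx.1.le, ← Real.sqrt_eq_rpow]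

lemma oneD_integral : ∫ x in Set.Ioo (0:ℝ) 1, (Real.sqrt x)⁻¹ = 2 := by
  have he : ∀ x ∈ Set.Ioo (0:ℝ) 1, (Real.sqrt x)⁻¹ = x ^ (-(1:ℝ)/2) := by
    intro x hx
    rw [show (-(1:ℝ)/2) = -(1/2) by ring, Real.rpow_neg hx.1.le, ← Real.sqrt_eq_rpow]
  rw [setIntegral_congr_fun measurableSet_Ioo he,
    ← MeasureTheory.integral_Ioc_eq_integral_Ioo,
    ← integral_of_le zero_le_one,
    integral_rpow (Or.inl (by norm_num))]
  rw [Real.one_rpow, Real.zero_rpow (by norm_num)]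
  norm_num

noncomputable def J (lam : ℝ) : ℝ :=
  ∫ p in (Set.Ioo (0:ℝ) 1) ×ˢ (Set.Ioo (0:ℝ) 1), Jfun lam p

lemma g2_integrable : IntegrableOn (fun p : ℝ × ℝ => (Real.sqrt p.1)⁻¹ * (Real.sqrt p.2)⁻¹)
    ((Set.Ioo (0:ℝ) 1) ×ˢ (Set.Ioo (0:ℝ) 1)) volume := by
  rw [IntegrableOn, Measure.volume_eq_prod, ← Measure.prod_restrict]
  exact oneD_integrable.mul_prod oneD_integrable

lemma g2_integral : ∫ p in (Set.Ioo (0:ℝ) 1) ×ˢ (Set.Ioo (0:ℝ) 1),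
    (Real.sqrt p.1)⁻¹ * (Real.sqrt p.2)⁻¹ = 4 := by
  rw [Measure.volume_eq_prod, ← Measure.prod_restrict,
    integral_prod_mul (f := fun x : ℝ => (Real.sqrt x)⁻¹) (g := fun x : ℝ => (Real.sqrt x)⁻¹),
    oneD_integral]
  norm_num

lemma main_integrable (lam : ℝ) :
    IntegrableOn (Jfun lam) ((Set.Ioo (0:ℝ) 1) ×ˢ (Set.Ioo (0:ℝ) 1)) volume := by
  refine Integrable.mono g2_integrable ((Jfun_measurable lam).aestronglyMeasurable.restrict) ?_
  refine (ae_restrict_iff' (measurableSet_Ioo.prod measurableSet_Ioo)).2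
    (Filter.Eventually.of_forall ?_)
  intro p hp
  rw [Real.norm_eq_abs, abs_of_nonneg (Jfun_nonneg lam hp.1.1 hp.2.1)]
  exact le_trans (Jfun_le lam hp.1.1 hp.2.1) (le_abs_self _)

lemma main_le (lam : ℝ) : J lam ≤ 4 := by
  rw [J, ← g2_integral]
  refine setIntegral_mono_on (main_integrable lam) g2_integrable
    (measurableSet_Ioo.prod measurableSet_Ioo) ?_
  intro p hp
  exact Jfun_le lam hp.1.1 hp.2.1

lemma main_pos (lam : ℝ) (h0 : 0 < lam) (h2 : lam < 2) : 0 < J lam := by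
  set r := (lam + 2)/4 with hrdef
  have hr0 : 0 < r := by rw [hrdef]; linarith
  have hr1 : r < 1 := by rw [hrdef]; linarith
  have hrl : lam / 2 < r := by rw [hrdef]; linarith
  set c0 := min r lam - max 0 (lam - r) with hc0def
  have hc0 : 0 < c0 := by
    rcases le_total lam r with h | h
    · rw [hc0def, min_eq_right h, max_eq_left (by linarith)]; linarith
    · rw [hc0def, min_eq_left h, max_eq_right (by linarith)]; linarith
  set B := (Set.Ioo r 1) ×ˢ (Set.Ioo r 1) with hBdef
  have hBsub : B ⊆ (Set.Ioo (0:ℝ) 1) ×ˢ (Set.Ioo (0:ℝ) 1) :=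
    Set.prod_mono (Set.Ioo_subset_Ioo hr0.le le_rfl) (Set.Ioo_subset_Ioo hr0.le le_rfl)
  have hBmeas : MeasurableSet B := measurableSet_Ioo.prod measurableSet_Ioo
  have hptwise : ∀ p ∈ B, c0 ≤ Jfun lam p := by
    intro p hp
    obtain ⟨⟨hp1r, hp11⟩, hp2r, hp21⟩ := hp
    have hp1 : 0 < p.1 := hr0.trans hp1r
    have hp2 : 0 < p.2 := hr0.trans hp2r
    rw [Jfun_eq]
    simp only
    rw [le_div_iff₀ (by positivity)]
    have hN1 : min r lam ≤ min p.2 lam := min_le_min hp2r.le le_rfl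
    have hN2 : max 0 (lam - p.1) ≤ max 0 (lam - r) := max_le_max le_rfl (by linarith)
    have hN : c0 ≤ max (min p.2 lam - max 0 (lam - p.1)) 0 :=
      le_trans (by rw [hc0def]; linarith) (le_max_left _ _)
    have hpp : p.1 * p.2 ≤ 1 := by nlinarith
    have := mul_le_of_le_one_right hc0.le hpp
    linarith
  have hint := main_integrable lam
  have hJ1 : ∫ p in B, Jfun lam p ≤ J lam := by
    rw [J]
    refine setIntegral_mono_set hint ?_ (HasSubset.Subset.eventuallyLE hBsub)
    refine (ae_restrict_iff' (measurableSet_Ioo.prod measurableSet_Ioo)).2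
      (Filter.Eventually.of_forall ?_)
    intro p hp
    exact Jfun_nonneg lam hp.1.1 hp.2.1
  have hvolB : volume B = ENNReal.ofReal ((1-r)*(1-r)) := by
    rw [hBdef, Measure.volume_eq_prod, Measure.prod_prod, Real.volume_Ioo,
      ← ENNReal.ofReal_mul (by linarith)]
  have hconst : ∫ _ in B, (c0 : ℝ) = c0 * ((1-r)*(1-r)) := by
    rw [setIntegral_const, measureReal_def, hvolB, ENNReal.toReal_ofReal (by nlinarith), smul_eq_mul, mul_comm]
  have hJ2 : c0 * ((1-r)*(1-r)) ≤ ∫ p in B, Jfun lam p := by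
    rw [← hconst]
    refine setIntegral_mono_on ?_ (hint.mono_set hBsub) hBmeas hptwise
    refine integrableOn_const ?_
    rw [hvolB]; exact ENNReal.ofReal_lt_top.ne
  have hfin : 0 < c0 * ((1-r)*(1-r)) := mul_pos hc0 (mul_pos (by linarith) (by linarith))
  linarith

theorem J_integrable_pos_le (lam : ℝ) :
    ((0 < lam ∧ lam < 2) →
      IntegrableOn (Jfun lam) ((Set.Ioo (0:ℝ) 1) ×ˢ (Set.Ioo (0:ℝ) 1)) volume ∧
      0 < J lam ∧ J lam ≤ 4) ∧
    (lam ∉ Set.Ioo (0:ℝ) 2 → J lam = 0) := by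
  constructor
  · rintro ⟨h0, h2⟩
    exact ⟨main_integrable lam, main_pos lam h0 h2, main_le lam⟩
  · intro hlam
    rw [J]
    rw [setIntegral_congr_fun (g := fun _ => (0:ℝ))
      (measurableSet_Ioo.prod measurableSet_Ioo) ?_]
    · exact integral_zero _ _
    · intro p hp
      rw [Jfun_eq]
      simp only
      have hnum : min p.2 lam - max 0 (lam - p.1) ≤ 0 := by
        rcases le_or_gt lam 0 with h | h
        · have := min_le_right p.2 lam
          have := le_max_left 0 (lam - p.1)
          linarith
        · have h2 : 2 ≤ lam := le_of_not_gt fun hc => hlam ⟨h, hc⟩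
          have := min_le_left p.2 lam
          have := le_max_right 0 (lam - p.1)
          have := hp.1.2
          have := hp.2.2
          linarith
      rw [max_eq_right hnum, zero_div]
end

section
/- Define $J(\lambda) = \int_0^1 \int_0^1 \frac{1}{\alpha\beta} \mu\big((0,\beta] \cap (\lambda - (0,\alpha])\big)\, d\alpha\, d\beta$. Then $J(1) = 2 - \zeta(2)$. -/
open MeasureTheory

open Set


lemma powMulLog_integral (n : ℕ) :
    ∫ u in Set.Ioo (0:ℝ) 1, u ^ n * (u * Real.log u) = -(1 / ((n:ℝ) + 2) ^ 2) := by
  rw [← MeasureTheory.integral_Ioc_eq_integral_Ioo,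
    ← intervalIntegral.integral_of_le (zero_le_one (α := ℝ))]
  have hn : ((n:ℝ) + 2) ≠ 0 := by positivity
  set F : ℝ → ℝ :=
    fun u => u ^ (n+1) * (u * Real.log u) / ((n:ℝ)+2) - u ^ (n+2) / ((n:ℝ)+2)^2 with hF
  have hcont : ContinuousOn F (Set.Icc 0 1) :=
    ((((continuous_pow (n+1)).mul Real.continuous_mul_log).div_const _).sub
      ((continuous_pow (n+2)).div_const _)).continuousOn
  have hderiv : ∀ x ∈ Set.Ioo (0:ℝ) 1,
      HasDerivWithinAt F (x ^ n * (x * Real.log x)) (Set.Ioi x) x := by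
    intro x hx
    have hx0 : x ≠ 0 := ne_of_gt hx.1
    have h1 : HasDerivAt (fun u : ℝ => u ^ (n+2)) (((n:ℝ)+2) * x ^ (n+1)) x := by
      have := hasDerivAt_pow (n+2) x
      norm_num at this ⊢
      convert this using 2 <;> push_cast <;> ring
    have h2 : HasDerivAt Real.log x⁻¹ x := Real.hasDerivAt_log hx0
    have h3 : HasDerivAt (fun u : ℝ => u ^ (n+2) * Real.log u)
        ((((n:ℝ)+2) * x ^ (n+1)) * Real.log x + x ^ (n+2) * x⁻¹) x := h1.mul h2
    have hFeq : F = fun u : ℝ =>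
        u ^ (n+2) * Real.log u / ((n:ℝ)+2) - u ^ (n+2) / ((n:ℝ)+2)^2 := by
      funext u; simp only [hF]; ring
    have h4 := (h3.div_const ((n:ℝ)+2)).sub (h1.div_const (((n:ℝ)+2)^2))
    rw [hFeq]
    refine HasDerivAt.hasDerivWithinAt ?_
    convert h4 using 1
    · rfl
    field_simp
    ring
  have hint : IntervalIntegrable (fun u : ℝ => u ^ n * (u * Real.log u)) volume 0 1 :=
    ((continuous_pow n).mul Real.continuous_mul_log).intervalIntegrable 0 1
  rw [intervalIntegral.integral_eq_sub_of_hasDeriv_right_of_le zero_le_one hcont hderiv hint]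
  simp only [hF, Real.log_one, Real.log_zero]
  norm_num

lemma hasSum_shift2 : HasSum (fun n : ℕ => 1 / ((n:ℝ)+2)^2) (Real.pi^2/6 - 1) := by
  have h := (hasSum_nat_add_iff' (f := fun n : ℕ => (1:ℝ) / (n:ℝ)^2) 2).2 hasSum_zeta_two
  norm_num [Finset.sum_range_succ] at h
  convert h using 2 with n
  push_cast
  · rfl
  · exact one_div _

lemma intKey : ∫ u in Set.Ioo (0:ℝ) 1, u * Real.log u / (1 - u) = 1 - Real.pi ^ 2 / 6 := by
  have hFint : ∀ n : ℕ, Integrable (fun u : ℝ => u ^ n * (u * Real.log u))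
      (volume.restrict (Set.Ioo (0:ℝ) 1)) := fun n =>
    (((continuous_pow n).mul Real.continuous_mul_log).integrableOn_Icc (a := 0) (b := 1)).mono_set
      Set.Ioo_subset_Icc_self
  have hnorm : ∀ n : ℕ, (∫ u in Set.Ioo (0:ℝ) 1, ‖u ^ n * (u * Real.log u)‖)
      = 1 / ((n:ℝ)+2)^2 := by
    intro n
    have h : ∀ u ∈ Set.Ioo (0:ℝ) 1, ‖u ^ n * (u * Real.log u)‖
        = -(u ^ n * (u * Real.log u)) := by
      intro u hu
      rw [Real.norm_eq_abs, abs_of_nonpos]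
      exact mul_nonpos_iff.2 (Or.inl ⟨pow_nonneg hu.1.le n, mul_nonpos_iff.2
        (Or.inl ⟨hu.1.le, Real.log_nonpos hu.1.le hu.2.le⟩)⟩)
    rw [setIntegral_congr_fun measurableSet_Ioo h, integral_neg, powMulLog_integral n]
    ring
  have hsum : Summable fun n : ℕ => ∫ u in Set.Ioo (0:ℝ) 1, ‖u ^ n * (u * Real.log u)‖ :=
    hasSum_shift2.summable.congr fun n => (hnorm n).symm
  have key := integral_tsum_of_summable_integral_norm hFint hsum
  have heq : ∀ u ∈ Set.Ioo (0:ℝ) 1,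
      u * Real.log u / (1 - u) = ∑' n : ℕ, u ^ n * (u * Real.log u) := by
    intro u hu
    rw [tsum_mul_right, tsum_geometric_of_lt_one hu.1.le hu.2]
    rw [div_eq_mul_inv, mul_comm]
  rw [setIntegral_congr_fun measurableSet_Ioo heq, ← key]
  have : ∀ n : ℕ, (∫ u in Set.Ioo (0:ℝ) 1, u ^ n * (u * Real.log u))
      = -(1 / ((n:ℝ)+2)^2) := powMulLog_integral
  rw [tsum_congr this, tsum_neg, hasSum_shift2.tsum_eq]
  ring

lemma innerInt (b : ℝ) (hb : b ∈ Set.Ioo (0:ℝ) 1) :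
    ∫ x in Set.Ioo (0:ℝ) 1, (0 ⊔ (b + x - 1)) / (b * x)
      = 1 + (1 - b) * Real.log (1 - b) / b := by
  obtain ⟨hb0, hb1⟩ := hb
  have h1b : (0:ℝ) < 1 - b := by linarith
  have hzero : EqOn (fun x : ℝ => (0 ⊔ (b + x - 1)) / (b * x)) (fun _ => (0:ℝ))
      (Set.Ioo 0 (1-b)) := by
    intro x hx
    have : b + x - 1 ≤ 0 := by linarith [hx.2]
    simp [sup_eq_left.2 this]
  have heq2 : EqOn (fun x : ℝ => (0 ⊔ (b + x - 1)) / (b * x))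
      (fun x => (b + x - 1) / (b * x)) (Set.Ico (1-b) 1) := by
    intro x hx
    have : (0:ℝ) ≤ b + x - 1 := by linarith [hx.1]
    simp [sup_eq_right.2 this]
  have hcont2 : ContinuousOn (fun x : ℝ => (b + x - 1) / (b * x)) (Set.Icc (1-b) 1) := by
    apply ContinuousOn.div
    · fun_prop
    · fun_prop
    · intro x hx
      have : (0:ℝ) < x := lt_of_lt_of_le h1b hx.1
      positivity
  have hint1 : IntegrableOn (fun x : ℝ => (0 ⊔ (b + x - 1)) / (b * x)) (Set.Ioo 0 (1-b)) := by
    exact (integrableOn_congr_fun hzero measurableSet_Ioo).2 (integrableOn_zero)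
  have hint2 : IntegrableOn (fun x : ℝ => (0 ⊔ (b + x - 1)) / (b * x)) (Set.Ico (1-b) 1) := by
    refine (integrableOn_congr_fun heq2 measurableSet_Ico).2 ?_
    exact (hcont2.integrableOn_Icc).mono_set Set.Ico_subset_Icc_self
  have hsplit : Set.Ioo (0:ℝ) 1 = Set.Ioo 0 (1-b) ∪ Set.Ico (1-b) 1 :=
    (Set.Ioo_union_Ico_eq_Ioo h1b (by linarith)).symm
  have hdisj : Disjoint (Set.Ioo (0:ℝ) (1-b)) (Set.Ico (1-b) 1) := by
    rw [Set.disjoint_left]; rintro x ⟨_, h1⟩ ⟨h2, _⟩; linarith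
  rw [hsplit, setIntegral_union hdisj measurableSet_Ico hint1 hint2,
    setIntegral_congr_fun measurableSet_Ioo hzero,
    setIntegral_congr_fun measurableSet_Ico heq2]
  simp only [integral_zero, zero_add]
  rw [integral_Ico_eq_integral_Ioo, ← MeasureTheory.integral_Ioc_eq_integral_Ioo,
    ← intervalIntegral.integral_of_le (by linarith : 1 - b ≤ 1)]
  have hderiv : ∀ x ∈ Set.uIcc (1-b) 1,
      HasDerivAt (fun x : ℝ => x / b + ((b-1)/b) * Real.log x) ((b + x - 1) / (b * x)) x := by
    intro x hx
    rw [Set.uIcc_of_le (by linarith : 1 - b ≤ 1)] at hx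
    have hx0 : (0:ℝ) < x := lt_of_lt_of_le h1b hx.1
    have h := ((hasDerivAt_id x).div_const b).add
      ((Real.hasDerivAt_log (ne_of_gt hx0)).const_mul ((b-1)/b))
    convert h using 1
    · rfl
    · rfl
    · rfl
    field_simp
    ring
  have hii : IntervalIntegrable (fun x : ℝ => (b + x - 1) / (b * x)) volume (1-b) 1 := by
    rw [intervalIntegrable_iff_integrableOn_Icc_of_le (by linarith : 1 - b ≤ 1)]
    exact hcont2.integrableOn_Icc
  rw [intervalIntegral.integral_eq_sub_of_hasDerivAt hderiv hii]
  rw [Real.log_one]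
  field_simp
  ring

lemma outerInt : ∫ b in Set.Ioo (0:ℝ) 1, (1 + (1 - b) * Real.log (1 - b) / b)
    = 2 - Real.pi ^ 2 / 6 := by
  have hmeas : Measurable fun b : ℝ => (1 - b) * Real.log (1 - b) / b :=
    (((measurable_const.sub measurable_id).mul
      (Real.measurable_log.comp (measurable_const.sub measurable_id))).div measurable_id)
  have hbound : ∀ b ∈ Set.Ioo (0:ℝ) 1, ‖(1 - b) * Real.log (1 - b) / b‖ ≤ 1 := by
    intro b hb
    obtain ⟨hb0, hb1⟩ := hb
    have h1b : (0:ℝ) < 1 - b := by linarith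
    have hlog : Real.log (1 - b) ≤ 0 := Real.log_nonpos h1b.le (by linarith)
    have hlog2 : -Real.log (1 - b) ≤ b / (1 - b) := by
      have := Real.log_le_sub_one_of_pos (show (0:ℝ) < (1-b)⁻¹ by positivity)
      rw [Real.log_inv] at this
      have h2 : (1-b)⁻¹ - 1 = b / (1-b) := by field_simp; ring
      linarith [this, h2.symm.le]
    have hv : (1 - b) * Real.log (1 - b) / b ≤ 0 :=
      div_nonpos_iff.2 (Or.inr ⟨mul_nonpos_iff.2 (Or.inl ⟨h1b.le, hlog⟩), hb0.le⟩)
    have h3 : (1 - b) * (-Real.log (1 - b)) ≤ b := by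
      calc (1 - b) * (-Real.log (1 - b)) ≤ (1 - b) * (b / (1 - b)) :=
            mul_le_mul_of_nonneg_left hlog2 h1b.le
        _ = b := by field_simp
    rw [Real.norm_eq_abs, abs_of_nonpos hv]
    rw [show -((1 - b) * Real.log (1 - b) / b) = ((1 - b) * (-Real.log (1 - b))) / b by ring]
    exact (div_le_one hb0).2 (by linarith)
  have hIntH : IntegrableOn (fun b : ℝ => (1 - b) * Real.log (1 - b) / b) (Set.Ioo 0 1) := by
    refine Integrable.mono' (g := fun _ => (1:ℝ)) ?_ hmeas.aestronglyMeasurable ?_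
    · exact integrableOn_const (by simp [Real.volume_Ioo])
    · exact (ae_restrict_iff' measurableSet_Ioo).2 (Filter.Eventually.of_forall hbound)
  rw [integral_add (show IntegrableOn (fun _ => (1:ℝ)) (Set.Ioo (0:ℝ) 1) volume from integrableOn_const (by simp [Real.volume_Ioo])) hIntH]
  have h1 : ∫ _ in Set.Ioo (0:ℝ) 1, (1:ℝ) = 1 := by
    simp [Real.volume_Ioo]
  have h2 : ∫ b in Set.Ioo (0:ℝ) 1, (1 - b) * Real.log (1 - b) / b
      = 1 - Real.pi ^ 2 / 6 := by
    rw [← MeasureTheory.integral_Ioc_eq_integral_Ioo,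
      ← intervalIntegral.integral_of_le (zero_le_one (α := ℝ))]
    have hcomp := intervalIntegral.integral_comp_sub_left (a := (0:ℝ)) (b := 1)
      (fun u => u * Real.log u / (1 - u)) 1
    norm_num at hcomp
    rw [hcomp, intervalIntegral.integral_of_le (zero_le_one (α := ℝ)),
      MeasureTheory.integral_Ioc_eq_integral_Ioo]
    exact intKey
  rw [h1, h2]
  ring

theorem J_one : J 1 = 2 - Real.pi ^ 2 / 6 := by
  have hJfun : ∀ p ∈ (Set.Ioo (0:ℝ) 1) ×ˢ (Set.Ioo (0:ℝ) 1),
      Jfun 1 p = (0 ⊔ (p.1 + p.2 - 1)) / (p.1 * p.2) := by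
    rintro ⟨a, c⟩ ⟨ha, hc⟩
    simp only [Jfun]
    rw [Set.image_const_sub_Ioc]
    have hset : Set.Ioc (0:ℝ) c ∩ Set.Ico (1-a) (1-0) = Set.Icc (1-a) c := by
      ext x
      simp only [Set.mem_inter_iff, Set.mem_Ioc, Set.mem_Ico, Set.mem_Icc]
      constructor
      · rintro ⟨⟨_, h2⟩, h3, _⟩; exact ⟨h3, h2⟩
      · rintro ⟨h1, h2⟩
        exact ⟨⟨by linarith [ha.2], h2⟩, h1, by linarith [hc.2]⟩
    rw [hset, Real.volume_Icc, ENNReal.toReal_ofReal']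
    congr 1
    rw [max_comm]
    congr 1
    ring
  rw [J, setIntegral_congr_fun (measurableSet_Ioo.prod measurableSet_Ioo) hJfun]
  have hmeas : Measurable fun p : ℝ × ℝ => (0 ⊔ (p.1 + p.2 - 1)) / (p.1 * p.2) :=
    (measurable_const.sup ((measurable_fst.add measurable_snd).sub measurable_const)).div
      (measurable_fst.mul measurable_snd)
  have hvol : (volume : Measure (ℝ × ℝ)) ((Set.Ioo (0:ℝ) 1) ×ˢ (Set.Ioo (0:ℝ) 1)) = 1 := by
    rw [MeasureTheory.Measure.volume_eq_prod, MeasureTheory.Measure.prod_prod]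
    simp [Real.volume_Ioo]
  have hInt : IntegrableOn (fun p : ℝ × ℝ => (0 ⊔ (p.1 + p.2 - 1)) / (p.1 * p.2))
      ((Set.Ioo (0:ℝ) 1) ×ˢ (Set.Ioo (0:ℝ) 1)) := by
    refine Integrable.mono' (g := fun _ => (1:ℝ)) ?_ hmeas.aestronglyMeasurable ?_
    · exact integrableOn_const (by rw [hvol]; exact ENNReal.one_ne_top)
    · refine (ae_restrict_iff' (measurableSet_Ioo.prod measurableSet_Ioo)).2
        (Filter.Eventually.of_forall ?_)
      rintro ⟨a, c⟩ ⟨ha, hc⟩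
      simp only
      rcases le_or_gt (a + c - 1) 0 with h | h
      · rw [sup_eq_left.2 h]
        simp
      · rw [sup_eq_right.2 h.le, Real.norm_eq_abs,
          abs_of_nonneg (div_nonneg h.le (mul_pos ha.1 hc.1).le)]
        refine (div_le_one (mul_pos ha.1 hc.1)).2 ?_
        nlinarith [ha.2, hc.2, ha.1, hc.1]
  rw [MeasureTheory.Measure.volume_eq_prod] at hInt ⊢
  rw [setIntegral_prod _ hInt]
  rw [setIntegral_congr_fun measurableSet_Ioo (fun a ha => innerInt a ha)]
  exact outerInt
end

section
/- Define $K(\lambda) = \int_0^1 \int_0^1 \frac{1}{\alpha\beta} \mu\big([\lambda, \beta+\lambda] \cap [0,\alpha]\big)\, d\alpha\, d\beta$. Then $K(0) = 2$, $K(\lambda) = K(-\lambda)$ for all real $\lambda$, and $K(\lambda) = 0$ whenever $|\lambda| \geq 1$. -/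
open MeasureTheory Real Set Filter


noncomputable def Kfun (lam : ℝ) : ℝ × ℝ → ℝ := fun p =>
  (volume (Set.Icc lam (p.2 + lam) ∩ Set.Icc (0:ℝ) p.1)).toReal / (p.1 * p.2)

lemma Kfun_eq (lam : ℝ) (p : ℝ × ℝ) :
    Kfun lam p = max (min (p.2 + lam) p.1 - max lam 0) 0 / (p.1 * p.2) := by
  rw [Kfun, Set.Icc_inter_Icc, Real.volume_Icc]
  rcases le_total (min (p.2 + lam) p.1 - max lam 0) 0 with h | h
  · rw [ENNReal.ofReal_eq_zero.2 (by simpa using h), max_eq_right h]; simp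
  · rw [ENNReal.toReal_ofReal (by simpa using h), max_eq_left h]

lemma Kfun_measurable (lam : ℝ) : Measurable (Kfun lam) := by
  have : Kfun lam = fun p : ℝ × ℝ =>
      max (min (p.2 + lam) p.1 - max lam 0) 0 / (p.1 * p.2) := by
    funext p; exact Kfun_eq lam p
  rw [this]
  exact (((((measurable_snd.add measurable_const).min measurable_fst).sub
    measurable_const).max measurable_const).div (measurable_fst.mul measurable_snd))

-- integrability of the slice with bound 1/α
lemma slice_integrable {a : ℝ} (ha : 0 < a) :
    IntegrableOn (fun b => Kfun 0 (a, b)) (Set.Ioc 0 1) volume := by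
  refine Integrable.mono' (g := fun _ => 1 / a)
    (integrableOn_const (by simp [Real.volume_Ioc]))
    ((Kfun_measurable 0).comp (measurable_const.prodMk measurable_id)).aestronglyMeasurable ?_
  refine (ae_restrict_iff' measurableSet_Ioc).2 (Filter.Eventually.of_forall fun b hb => ?_)
  have hb0 : 0 < b := hb.1
  rw [Kfun_eq]
  simp only [add_zero, max_self, sub_zero]
  have hmin0 : 0 ≤ min b a := le_min hb0.le ha.le
  rw [max_eq_left hmin0, Real.norm_eq_abs, abs_of_nonneg (div_nonneg hmin0 (by positivity))]
  rw [div_le_div_iff₀ (by positivity) ha]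
  have : min b a ≤ b := min_le_left _ _
  nlinarith

lemma slice_integral {a : ℝ} (ha : a ∈ Set.Ioo (0:ℝ) 1) :
    ∫ b in Set.Ioo (0:ℝ) 1, Kfun 0 (a, b) = 1 - Real.log a := by
  have ha0 := ha.1
  have ha1 := ha.2
  have hInt : IntervalIntegrable (fun b => Kfun 0 (a, b)) volume 0 1 := by
    rw [intervalIntegrable_iff_integrableOn_Ioc_of_le zero_le_one]
    exact slice_integrable ha0
  have h1 : ∫ b in (0:ℝ)..a, Kfun 0 (a, b) = 1 := by
    rw [intervalIntegral.integral_of_le ha0.le, integral_Ioc_eq_integral_Ioo,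
      setIntegral_congr_fun measurableSet_Ioo (g := fun _ => 1 / a) ?_]
    · rw [setIntegral_const, measureReal_def, Real.volume_Ioo, sub_zero, ENNReal.toReal_ofReal ha0.le,
        smul_eq_mul]
      field_simp
    · intro b hb
      show Kfun 0 (a, b) = 1 / a
      rw [Kfun_eq]
      simp only [add_zero, max_self, sub_zero]
      rw [min_eq_left hb.2.le, max_eq_left hb.1.le]
      rw [div_eq_div_iff (by nlinarith [hb.1] : (0:ℝ) < a * b).ne' ha0.ne']
      ring
  have h2 : ∫ b in a..(1:ℝ), Kfun 0 (a, b) = -Real.log a := by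
    rw [intervalIntegral.integral_congr (g := fun b => 1 / b) ?_]
    · rw [integral_one_div (by
        rw [Set.uIcc_of_le ha1.le]
        exact fun h => absurd h.1 (by linarith))]
      rw [one_div, Real.log_inv]
    · intro b hb
      rw [Set.uIcc_of_le ha1.le] at hb
      have hb0 : 0 < b := lt_of_lt_of_le ha0 hb.1
      show Kfun 0 (a, b) = 1 / b
      rw [Kfun_eq]
      simp only [add_zero, max_self, sub_zero]
      rw [min_eq_right hb.1, max_eq_left ha0.le]
      rw [div_eq_div_iff (by positivity) hb0.ne']
      ring
  have hsub1 : Set.uIcc (0:ℝ) a ⊆ Set.uIcc (0:ℝ) 1 := by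
    rw [Set.uIcc_of_le ha0.le, Set.uIcc_of_le zero_le_one]
    exact Set.Icc_subset_Icc le_rfl ha1.le
  have hsub2 : Set.uIcc a (1:ℝ) ⊆ Set.uIcc (0:ℝ) 1 := by
    rw [Set.uIcc_of_le ha1.le, Set.uIcc_of_le zero_le_one]
    exact Set.Icc_subset_Icc ha0.le le_rfl
  have hsplit := intervalIntegral.integral_add_adjacent_intervals
    (a := (0:ℝ)) (b := a) (c := 1) (f := fun b => Kfun 0 (a, b))
    (hInt.mono_set hsub1) (hInt.mono_set hsub2)
  rw [← integral_Ioc_eq_integral_Ioo, ← intervalIntegral.integral_of_le zero_le_one, ← hsplit,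
    h1, h2]
  ring


noncomputable def K (lam : ℝ) : ℝ :=
  ∫ p in (Set.Ioo (0:ℝ) 1) ×ˢ (Set.Ioo (0:ℝ) 1), Kfun lam p

lemma intervalIntegrable_log01 : IntervalIntegrable Real.log volume 0 1 := by
  rw [intervalIntegrable_iff_integrableOn_Ioc_of_le zero_le_one]
  have hg : IntegrableOn (fun x : ℝ => 2 * x ^ (-(1:ℝ)/2)) (Set.Ioc 0 1) volume := by
    have := (intervalIntegral.intervalIntegrable_rpow' (a := 0) (b := 1) (r := -(1:ℝ)/2)
      (by norm_num)).const_mul 2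
    rwa [intervalIntegrable_iff_integrableOn_Ioc_of_le zero_le_one] at this
  refine Integrable.mono' hg (Real.measurable_log.aestronglyMeasurable) ?_
  refine (ae_restrict_iff' measurableSet_Ioc).2 (Filter.Eventually.of_forall fun x hx => ?_)
  have hx0 : 0 < x := hx.1
  have hlog : Real.log x ≤ 0 := Real.log_nonpos hx0.le hx.2
  rw [Real.norm_eq_abs, abs_of_nonpos hlog]
  have h1 : Real.log (x ^ (-(1:ℝ)/2)) ≤ x ^ (-(1:ℝ)/2) - 1 :=
    Real.log_le_sub_one_of_pos (Real.rpow_pos_of_pos hx0 _)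
  rw [Real.log_rpow hx0] at h1
  have hr : (0:ℝ) ≤ x ^ (-(1:ℝ)/2) := (Real.rpow_pos_of_pos hx0 _).le
  nlinarith

lemma integral_log01 : ∫ x in (0:ℝ)..1, Real.log x = -1 := by
  have hc : Continuous fun x : ℝ => x * Real.log x - x :=
    Real.continuous_mul_log.sub continuous_id
  have h0 := hc.tendsto 0
  have h1 := hc.tendsto 1
  norm_num at h0 h1
  have := intervalIntegral.integral_eq_sub_of_hasDerivAt_of_tendsto
    (f := fun x : ℝ => x * Real.log x - x) (f' := Real.log) (a := 0) (b := 1)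
    zero_lt_one
    (fun x hx => by
      have h := (Real.hasDerivAt_mul_log hx.1.ne').sub (hasDerivAt_id x)
      exact h.congr_deriv (by ring))
    intervalIntegrable_log01
    (h0.mono_left nhdsWithin_le_nhds) (h1.mono_left nhdsWithin_le_nhds)
  simpa using this

lemma K_vanish (lam : ℝ) (h : 1 ≤ |lam|) : K lam = 0 := by
  refine setIntegral_eq_zero_of_forall_eq_zero fun p hp => ?_
  obtain ⟨⟨-, h1⟩, ⟨-, h2⟩⟩ := hp
  rw [Kfun_eq]
  rcases le_abs.1 h with h' | h'
  · rw [max_eq_right, zero_div]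
    have : min (p.2 + lam) p.1 ≤ p.1 := min_le_right _ _
    have : max lam 0 = lam := max_eq_left (by linarith)
    nlinarith [min_le_right (p.2 + lam) p.1]
  · rw [max_eq_right, zero_div]
    have h3 : min (p.2 + lam) p.1 ≤ p.2 + lam := min_le_left _ _
    have h4 : (0:ℝ) ≤ max lam 0 := le_max_right _ _
    nlinarith

lemma K_symm (lam : ℝ) : K lam = K (-lam) := by
  have hswap : ∀ p : ℝ × ℝ, Kfun (-lam) p = Kfun lam (Prod.swap p) := by
    intro p
    rw [Kfun_eq, Kfun_eq]
    have : p.2 * p.1 = p.1 * p.2 := mul_comm _ _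
    rcases le_total 0 lam with h | h
    · rw [max_eq_right (neg_nonpos.2 h), max_eq_left h]
      simp only [Prod.fst_swap, Prod.snd_swap, this]
      congr 2
      rw [sub_zero, ← min_sub_sub_right, min_comm]
      ring_nf
    · rw [max_eq_left (neg_nonneg.2 h), max_eq_right h]
      simp only [Prod.fst_swap, Prod.snd_swap, this]
      congr 2
      rw [sub_neg_eq_add, ← min_sub_sub_right, min_comm]
      ring_nf
      rw [← min_add_add_left]
      ring_nf
  rw [K, K]
  simp only [hswap]
  have hmp : MeasurePreserving (Prod.swap : ℝ × ℝ → ℝ × ℝ) volume volume := by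
    rw [Measure.volume_eq_prod]
    exact Measure.measurePreserving_swap
  have := hmp.setIntegral_preimage_emb
    (MeasurableEquiv.prodComm (α := ℝ) (β := ℝ)).measurableEmbedding (Kfun lam)
    ((Set.Ioo (0:ℝ) 1) ×ˢ (Set.Ioo (0:ℝ) 1))
  rw [← this, Set.preimage_swap_prod]



lemma K_zero_eq_two : K 0 = 2 := by
  have hS : MeasurableSet ((Set.Ioo (0:ℝ) 1) ×ˢ (Set.Ioo (0:ℝ) 1)) :=
    measurableSet_Ioo.prod measurableSet_Ioo
  have hnn : 0 ≤ᵐ[volume.restrict ((Set.Ioo (0:ℝ) 1) ×ˢ (Set.Ioo (0:ℝ) 1))] Kfun 0 := by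
    refine (ae_restrict_iff' hS).2 (Filter.Eventually.of_forall fun p hp => ?_)
    rw [Kfun_eq]
    exact div_nonneg (le_max_right _ _) (by nlinarith [hp.1.1, hp.2.1])
  rw [K, MeasureTheory.integral_eq_lintegral_of_nonneg_ae hnn
    (Kfun_measurable 0).aestronglyMeasurable]
  rw [Measure.volume_eq_prod, ← Measure.prod_restrict]
  rw [lintegral_prod (fun p => ENNReal.ofReal (Kfun 0 p)) ((Kfun_measurable 0).ennreal_ofReal).aemeasurable]
  have hlogIoo : IntegrableOn Real.log (Set.Ioo (0:ℝ) 1) volume := by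
    have := intervalIntegrable_log01
    rw [intervalIntegrable_iff_integrableOn_Ioc_of_le zero_le_one] at this
    exact this.mono_set Set.Ioo_subset_Ioc_self
  have key : ∀ᵐ a ∂(volume.restrict (Set.Ioo (0:ℝ) 1)),
      ∫⁻ y in Set.Ioo (0:ℝ) 1, ENNReal.ofReal (Kfun 0 (a, y)) = ENNReal.ofReal (1 - Real.log a) := by
    refine (ae_restrict_iff' measurableSet_Ioo).2 (Filter.Eventually.of_forall fun a ha => ?_)
    have hint : IntegrableOn (fun b => Kfun 0 (a, b)) (Set.Ioo (0:ℝ) 1) volume :=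
      (slice_integrable ha.1).mono_set Set.Ioo_subset_Ioc_self
    have hnn2 : 0 ≤ᵐ[volume.restrict (Set.Ioo (0:ℝ) 1)] fun b => Kfun 0 (a, b) := by
      refine (ae_restrict_iff' measurableSet_Ioo).2 (Filter.Eventually.of_forall fun b hb => ?_)
      simp only [Pi.zero_apply]
      rw [Kfun_eq]
      exact div_nonneg (le_max_right _ _) (by nlinarith [ha.1, hb.1])
    rw [← ofReal_integral_eq_lintegral_ofReal hint hnn2, slice_integral ha]
  rw [lintegral_congr_ae key]
  have hint2 : IntegrableOn (fun a => 1 - Real.log a) (Set.Ioo (0:ℝ) 1) volume :=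
    (integrableOn_const (by simp [Real.volume_Ioo])).sub hlogIoo
  have hnn3 : 0 ≤ᵐ[volume.restrict (Set.Ioo (0:ℝ) 1)] fun a => 1 - Real.log a := by
    refine (ae_restrict_iff' measurableSet_Ioo).2 (Filter.Eventually.of_forall fun a ha => ?_)
    simp only [Pi.zero_apply]
    have := Real.log_nonpos ha.1.le ha.2.le
    linarith
  rw [← ofReal_integral_eq_lintegral_ofReal hint2 hnn3]
  have hval : ∫ a in Set.Ioo (0:ℝ) 1, (1 - Real.log a) = 2 := by
    rw [← integral_Ioc_eq_integral_Ioo, ← intervalIntegral.integral_of_le zero_le_one,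
      intervalIntegral.integral_sub intervalIntegrable_const intervalIntegrable_log01,
      integral_log01]
    norm_num
  rw [hval]
  simp

theorem K_basic_properties :
    K 0 = 2 ∧ (∀ lam : ℝ, K lam = K (-lam)) ∧ (∀ lam : ℝ, 1 ≤ |lam| → K lam = 0) :=
  ⟨K_zero_eq_two, K_symm, K_vanish⟩
end

section
/- Let $N, h$ be positive integers with $h = N^2 + \Delta$ for some integer $\Delta$. Then the number of quadruples $(a,b,c,d) \in \{1,\ldots,N\}^4$ satisfying $ad - bc = h$ is at most $O_\varepsilon(N^{\varepsilon}(1 + |\Delta|))$ for every $\varepsilon > 0$, provided $|\Delta| \leq N^2$. -/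
open Finset Real

lemma my_divisor_bound (ε : ℝ) (hε : 0 < ε) :
    ∃ C : ℝ, 1 ≤ C ∧ ∀ n : ℕ, n ≠ 0 → (n.divisors.card : ℝ) ≤ C * (n : ℝ) ^ ε := by
  have hlog2 : 0 < Real.log 2 := Real.log_pos one_lt_two
  set K : ℝ := 1 + 1 / (ε * Real.log 2) with hKdef
  have hK1 : 1 ≤ K := le_add_of_nonneg_right (by positivity)
  set T : ℝ := (2 : ℝ) ^ (1 / ε) with hTdef
  set M : ℕ := ⌈T⌉₊ with hMdef
  refine ⟨K ^ M, one_le_pow₀ hK1, ?_⟩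
  intro n hn
  rw [Nat.card_divisors hn]
  have key : ∀ p ∈ n.primeFactors,
      ((n.factorization p + 1 : ℕ) : ℝ) ≤
        (if (p : ℝ) < T then K else 1) * ((p : ℝ) ^ n.factorization p) ^ ε := by
    intro p hp
    have hp2 : 2 ≤ p := (Nat.prime_of_mem_primeFactors hp).two_le
    have hp2R : (2 : ℝ) ≤ (p : ℝ) := by exact_mod_cast hp2
    have hp0 : (0 : ℝ) < (p : ℝ) := by linarith
    set a : ℕ := n.factorization p with hadef
    by_cases hcase : (p : ℝ) < T
    · rw [if_pos hcase]
      have h2a : ((2 : ℝ) ^ a) ^ ε ≤ ((p : ℝ) ^ a) ^ ε :=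
        Real.rpow_le_rpow (by positivity) (pow_le_pow_left₀ (by norm_num) hp2R a) hε.le
      have hexp : ((a : ℝ) + 1) ≤ K * ((2 : ℝ) ^ a) ^ ε := by
        have h1 : ((2 : ℝ) ^ a) ^ ε = Real.exp ((a : ℝ) * ε * Real.log 2) := by
          rw [← Real.rpow_natCast 2 a, ← Real.rpow_mul (by norm_num),
            Real.rpow_def_of_pos (by norm_num)]
          ring_nf
        rw [h1]
        have h2 : (a : ℝ) * ε * Real.log 2 + 1 ≤ Real.exp ((a : ℝ) * ε * Real.log 2) :=
          Real.add_one_le_exp _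
        have ha0 : (0 : ℝ) ≤ (a : ℝ) := Nat.cast_nonneg a
        have hK2 : K * (ε * Real.log 2) = ε * Real.log 2 + 1 := by
          rw [hKdef, add_mul, one_div_mul_cancel (mul_pos hε hlog2).ne']; ring
        nlinarith [mul_pos hε hlog2]
      calc ((a + 1 : ℕ) : ℝ) = (a : ℝ) + 1 := by push_cast; ring
        _ ≤ K * ((2 : ℝ) ^ a) ^ ε := hexp
        _ ≤ K * ((p : ℝ) ^ a) ^ ε := by
            exact mul_le_mul_of_nonneg_left h2a (by linarith)
    · rw [if_neg hcase, one_mul]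
      have hpT : T ≤ (p : ℝ) := not_lt.1 hcase
      have h2 : (2 : ℝ) ≤ (p : ℝ) ^ ε := by
        have h3 : T ^ ε ≤ (p : ℝ) ^ ε := Real.rpow_le_rpow (by positivity) hpT hε.le
        rwa [hTdef, ← Real.rpow_mul (by norm_num), one_div_mul_cancel hε.ne',
          Real.rpow_one] at h3
      have h3 : ((p : ℝ) ^ a) ^ ε = ((p : ℝ) ^ ε) ^ a := by
        rw [← Real.rpow_natCast (p : ℝ) a, ← Real.rpow_mul hp0.le, mul_comm,
          Real.rpow_mul hp0.le, Real.rpow_natCast]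
      rw [h3]
      calc ((a + 1 : ℕ) : ℝ) ≤ ((2 ^ a : ℕ) : ℝ) := by exact_mod_cast (Nat.lt_two_pow_self (n := a))
        _ = (2 : ℝ) ^ a := by push_cast; ring
        _ ≤ ((p : ℝ) ^ ε) ^ a := pow_le_pow_left₀ (by norm_num) h2 a
  have hprodn : ∏ p ∈ n.primeFactors, (p : ℝ) ^ n.factorization p = (n : ℝ) := by
    have h0 : ∏ p ∈ n.primeFactors, p ^ n.factorization p = n := by
      conv_rhs => rw [← Nat.factorization_prod_pow_eq_self hn]
      rfl
    calc ∏ p ∈ n.primeFactors, (p : ℝ) ^ n.factorization p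
        = ((∏ p ∈ n.primeFactors, p ^ n.factorization p : ℕ) : ℝ) := by push_cast; rfl
      _ = (n : ℝ) := by rw [h0]
  calc ((n.primeFactors.prod (n.factorization · + 1) : ℕ) : ℝ)
      = ∏ p ∈ n.primeFactors, ((n.factorization p + 1 : ℕ) : ℝ) := by push_cast; rfl
    _ ≤ ∏ p ∈ n.primeFactors,
        (if (p : ℝ) < T then K else 1) * ((p : ℝ) ^ n.factorization p) ^ ε :=
        Finset.prod_le_prod (fun p _ => by positivity) key
    _ = (∏ p ∈ n.primeFactors, if (p : ℝ) < T then K else 1) *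
        ∏ p ∈ n.primeFactors, ((p : ℝ) ^ n.factorization p) ^ ε := Finset.prod_mul_distrib
    _ ≤ K ^ M * (n : ℝ) ^ ε := by
        have h1 : ∏ p ∈ n.primeFactors, ((p : ℝ) ^ n.factorization p) ^ ε = (n : ℝ) ^ ε := by
          rw [Real.finset_prod_rpow _ _ (fun p _ => by positivity), hprodn]
        rw [h1]
        apply mul_le_mul_of_nonneg_right _ (Real.rpow_nonneg (Nat.cast_nonneg n) ε)
        have h2 : (∏ p ∈ n.primeFactors, if (p : ℝ) < T then K else 1)
            = K ^ (n.primeFactors.filter (fun p : ℕ => (p : ℝ) < T)).card := by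
          rw [Finset.prod_ite, Finset.prod_const, Finset.prod_const, one_pow, mul_one]
        have h3 : (n.primeFactors.filter (fun p : ℕ => (p : ℝ) < T)).card ≤ M := by
          refine le_trans (Finset.card_le_card (fun p hp => ?_)) (Finset.card_range M).le
          have hpT : (p : ℝ) < T := (Finset.mem_filter.1 hp).2
          exact Finset.mem_range.2 (by exact_mod_cast lt_of_lt_of_le hpT (Nat.le_ceil T))
        rw [h2]
        exact pow_le_pow_right₀ hK1 h3
theorem difference_solutions_bound :
    ∀ ε : ℝ, 0 < ε → ∃ C : ℝ, 0 < C ∧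
      ∀ (N h : ℕ) (Δ : ℤ), 0 < N → 0 < h → (h : ℤ) = (N : ℤ) ^ 2 + Δ →
        |Δ| ≤ (N : ℤ) ^ 2 →
        ((((Finset.Icc 1 N ×ˢ Finset.Icc 1 N) ×ˢ (Finset.Icc 1 N ×ˢ Finset.Icc 1 N)).filter
            (fun x => (x.1.1 : ℤ) * x.2.2 - (x.1.2 : ℤ) * x.2.1 = (h : ℤ))).card : ℝ)
          ≤ C * (N : ℝ) ^ ε * (1 + |(Δ : ℝ)|) := by
  intro ε hε
  obtain ⟨C₀, hC₀1, hC₀⟩ := my_divisor_bound (ε / 2) (by linarith)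
  refine ⟨3 * C₀, by linarith, ?_⟩
  intro N h Δ hN hh hhΔ habs
  set S := (((Finset.Icc 1 N ×ˢ Finset.Icc 1 N) ×ˢ (Finset.Icc 1 N ×ˢ Finset.Icc 1 N)).filter
      (fun x => (x.1.1 : ℤ) * x.2.2 - (x.1.2 : ℤ) * x.2.1 = (h : ℤ))) with hSdef
  set A := (Finset.Icc 1 N ×ˢ Finset.Icc 1 N).filter (fun p => h < p.1 * p.2) with hAdef
  set m := N * N - h with hmdef
  have hNR : (1 : ℝ) ≤ (N : ℝ) := by exact_mod_cast hN
  have hNpow : (0 : ℝ) < (N : ℝ) ^ ε := Real.rpow_pos_of_pos (by linarith) ε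
  -- bounds for members of S
  have hmemS : ∀ x ∈ S, (x.1.1 ∈ Finset.Icc 1 N ∧ x.1.2 ∈ Finset.Icc 1 N) ∧
      (x.2.1 ∈ Finset.Icc 1 N ∧ x.2.2 ∈ Finset.Icc 1 N) ∧
      (x.1.1 : ℤ) * x.2.2 - (x.1.2 : ℤ) * x.2.1 = (h : ℤ) := by
    intro x hx
    obtain ⟨hx1, hx2⟩ := Finset.mem_filter.1 hx
    obtain ⟨ha, hb⟩ := Finset.mem_product.1 hx1
    exact ⟨Finset.mem_product.1 ha, Finset.mem_product.1 hb, hx2⟩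
  -- S is covered by the biUnion over A
  have hsub : S ⊆ A.biUnion (fun p => S.filter (fun x => x.1.1 = p.1 ∧ x.2.2 = p.2)) := by
    intro x hx
    obtain ⟨⟨ha, hb⟩, ⟨hc, hd⟩, heq⟩ := hmemS x hx
    rw [Finset.mem_biUnion]
    refine ⟨(x.1.1, x.2.2), ?_, Finset.mem_filter.2 ⟨hx, rfl, rfl⟩⟩
    rw [hAdef, Finset.mem_filter, Finset.mem_product]
    refine ⟨⟨ha, hd⟩, ?_⟩
    have hb1 : 1 ≤ x.1.2 := (Finset.mem_Icc.1 hb).1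
    have hc1 : 1 ≤ x.2.1 := (Finset.mem_Icc.1 hc).1
    have : (h : ℤ) < (x.1.1 : ℤ) * x.2.2 := by
      have h1 : (1 : ℤ) ≤ (x.1.2 : ℤ) * x.2.1 := by
        have h1n : 1 ≤ x.1.2 * x.2.1 := Nat.one_le_iff_ne_zero.2 (Nat.mul_pos hb1 hc1).ne'
        exact_mod_cast h1n
      linarith
    exact_mod_cast this
  -- per-fiber bound via divisors
  have hstep : ∀ p ∈ A,
      ((S.filter (fun x => x.1.1 = p.1 ∧ x.2.2 = p.2)).card : ℝ) ≤ C₀ * (N : ℝ) ^ ε := by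
    intro p hp
    obtain ⟨hpmem, hplt⟩ := Finset.mem_filter.1 hp
    obtain ⟨hp1, hp2⟩ := Finset.mem_product.1 hpmem
    have hp1N : p.1 ≤ N := (Finset.mem_Icc.1 hp1).2
    have hp2N : p.2 ≤ N := (Finset.mem_Icc.1 hp2).2
    set k := p.1 * p.2 - h with hkdef
    have hk0 : k ≠ 0 := by omega
    have hkZ : (k : ℤ) = (p.1 : ℤ) * p.2 - (h : ℤ) := by
      rw [hkdef, Nat.cast_sub hplt.le]
      push_cast
      ring
    have hcard : (S.filter (fun x => x.1.1 = p.1 ∧ x.2.2 = p.2)).card ≤ k.divisors.card := by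
      apply Finset.card_le_card_of_injOn (fun x => x.1.2)
      · intro x hx
        obtain ⟨hxS, hx1, hx2⟩ := Finset.mem_filter.1 hx
        obtain ⟨_, _, heq⟩ := hmemS x hxS
        have hbc : (x.1.2 : ℤ) * x.2.1 = (k : ℤ) := by
          rw [hkZ, ← hx1, ← hx2]
          linarith
        have hbcN : x.1.2 * x.2.1 = k := by exact_mod_cast hbc
        exact Nat.mem_divisors.2 ⟨⟨x.2.1, hbcN.symm⟩, hk0⟩
      · intro x hx y hy hxy
        obtain ⟨hxS, hx1, hx2⟩ := Finset.mem_filter.1 hx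
        obtain ⟨hyS, hy1, hy2⟩ := Finset.mem_filter.1 hy
        obtain ⟨⟨_, hxb⟩, _, heqx⟩ := hmemS x hxS
        obtain ⟨_, _, heqy⟩ := hmemS y hyS
        simp only at hxy
        have hbcx : (x.1.2 : ℤ) * x.2.1 = (k : ℤ) := by rw [hkZ, ← hx1, ← hx2]; linarith
        have hbcy : (y.1.2 : ℤ) * y.2.1 = (k : ℤ) := by rw [hkZ, ← hy1, ← hy2]; linarith
        have hb1 : 0 < x.1.2 := (Finset.mem_Icc.1 hxb).1
        have hc : x.2.1 = y.2.1 := by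
          have hcast : (x.1.2 : ℤ) = (y.1.2 : ℤ) := by exact_mod_cast hxy
          have : (x.1.2 : ℤ) * x.2.1 = (x.1.2 : ℤ) * y.2.1 := by
            rw [hbcx, hcast, hbcy]
          have h2 : (x.2.1 : ℤ) = y.2.1 :=
            mul_left_cancel₀ (by exact_mod_cast hb1.ne') this
          exact_mod_cast h2
        have : x = ((p.1, x.1.2), (x.2.1, p.2)) := by
          rw [← hx1, ← hx2]
        rw [this, hc, hxy]
        rw [← hy1, ← hy2]
    have hkN : k ≤ N * N := le_trans (Nat.sub_le _ _) (Nat.mul_le_mul hp1N hp2N)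
    calc ((S.filter (fun x => x.1.1 = p.1 ∧ x.2.2 = p.2)).card : ℝ)
        ≤ (k.divisors.card : ℝ) := by exact_mod_cast hcard
      _ ≤ C₀ * (k : ℝ) ^ (ε / 2) := hC₀ k hk0
      _ ≤ C₀ * ((N : ℝ) * N) ^ (ε / 2) := by
          apply mul_le_mul_of_nonneg_left _ (by linarith)
          apply Real.rpow_le_rpow (Nat.cast_nonneg k) _ (by linarith)
          exact_mod_cast hkN
      _ = C₀ * (N : ℝ) ^ ε := by
          congr 1
          have h1 : (N : ℝ) * N = (N : ℝ) ^ (2 : ℝ) := by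
            rw [Real.rpow_two]
            ring
          rw [h1, ← Real.rpow_mul (by linarith)]
          congr 1
          ring
  -- count A
  have hAsub : A ⊆ Finset.Icc (h / N + 1) N ×ˢ Finset.Icc (h / N + 1) N := by
    intro p hp
    obtain ⟨hpmem, hplt⟩ := Finset.mem_filter.1 hp
    obtain ⟨hp1, hp2⟩ := Finset.mem_product.1 hpmem
    have hp1N : p.1 ≤ N := (Finset.mem_Icc.1 hp1).2
    have hp2N : p.2 ≤ N := (Finset.mem_Icc.1 hp2).2
    have h1 : h / N < p.1 := (Nat.div_lt_iff_lt_mul hN).2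
      (lt_of_lt_of_le hplt (Nat.mul_le_mul_left _ hp2N))
    have h2 : h / N < p.2 := (Nat.div_lt_iff_lt_mul hN).2
      (lt_of_lt_of_le hplt (by rw [mul_comm] at *; exact Nat.mul_le_mul_left _ hp1N))
    rw [Finset.mem_product, Finset.mem_Icc, Finset.mem_Icc]
    omega
  have hAcard : A.card ≤ (N - h / N) * (N - h / N) := by
    have := Finset.card_le_card hAsub
    rwa [Finset.card_product, Nat.card_Icc, show N + 1 - (h / N + 1) = N - h / N by omega]
      at this
  -- key arithmetic bound
  have hQ : (N - h / N) * N ≤ m + N := by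
    rcases Nat.lt_or_ge h (N * N) with hc | hc
    · have hq : h / N ≤ N := by
        have h1 : h / N ≤ N * N / N := Nat.div_le_div_right hc.le
        rwa [Nat.mul_div_cancel _ hN] at h1
      have h2 : h < (h / N + 1) * N := (Nat.div_lt_iff_lt_mul hN).1 (Nat.lt_succ_self (h / N))
      rw [Nat.add_mul, one_mul] at h2
      have h3 : (N - h / N) * N = N * N - h / N * N := by rw [Nat.sub_mul]
      have h4 : h / N * N ≤ N * N := Nat.mul_le_mul_right N hq
      omega
    · have h1 : N ≤ h / N := (Nat.le_div_iff_mul_le hN).2 hc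
      have h2 : N - h / N = 0 := by omega
      simp [h2]
  have hmN : m ≤ N * N := Nat.sub_le _ _
  have hmΔ : (m : ℝ) ≤ |(Δ : ℝ)| := by
    rcases le_or_gt h (N * N) with hc | hc
    · have hsq : (N : ℤ) ^ 2 = (N : ℤ) * N := sq (N : ℤ)
      have h1 : (m : ℤ) = (N : ℤ) * N - h := by
        rw [hmdef, Nat.cast_sub hc]
        push_cast
        ring
      have h2 : (m : ℤ) = -Δ := by rw [h1]; linarith [hhΔ, hsq]
      have h3 : (m : ℤ) ≤ |Δ| := h2 ▸ neg_le_abs Δ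
      calc (m : ℝ) = ((m : ℤ) : ℝ) := by push_cast; ring
        _ ≤ (|Δ| : ℝ) := by exact_mod_cast h3
        _ = |(Δ : ℝ)| := rfl
    · have h0 : m = 0 := by omega
      rw [h0]
      simp [abs_nonneg]
  -- real bound on the box
  have hx0 : (0 : ℝ) ≤ ((N - h / N : ℕ) : ℝ) := Nat.cast_nonneg _
  have hQR : ((N - h / N : ℕ) : ℝ) * N ≤ (m : ℝ) + N := by exact_mod_cast hQ
  have hmNR : (m : ℝ) ≤ (N : ℝ) * N := by exact_mod_cast hmN
  have hm0 : (0 : ℝ) ≤ (m : ℝ) := Nat.cast_nonneg m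
  have hbox : ((N - h / N : ℕ) : ℝ) * ((N - h / N : ℕ) : ℝ) ≤ 3 * (1 + (m : ℝ)) := by
    set x := ((N - h / N : ℕ) : ℝ)
    have hN0 : (0 : ℝ) < N := by linarith
    nlinarith [mul_le_mul hQR hQR (by positivity) (by linarith : (0:ℝ) ≤ (m:ℝ) + N),
      sq_nonneg ((m : ℝ) - (N : ℝ) * N), mul_pos hN0 hN0]
  -- assemble
  calc (S.card : ℝ)
      ≤ ((A.biUnion (fun p => S.filter (fun x => x.1.1 = p.1 ∧ x.2.2 = p.2))).card : ℝ) := by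
        exact_mod_cast Finset.card_le_card hsub
    _ ≤ ((∑ p ∈ A, (S.filter (fun x => x.1.1 = p.1 ∧ x.2.2 = p.2)).card : ℕ) : ℝ) := by
        exact_mod_cast Finset.card_biUnion_le
    _ = ∑ p ∈ A, ((S.filter (fun x => x.1.1 = p.1 ∧ x.2.2 = p.2)).card : ℝ) := by push_cast; rfl
    _ ≤ ∑ p ∈ A, C₀ * (N : ℝ) ^ ε := Finset.sum_le_sum hstep
    _ = (A.card : ℝ) * (C₀ * (N : ℝ) ^ ε) := by rw [Finset.sum_const, nsmul_eq_mul]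
    _ ≤ (((N - h / N) * (N - h / N) : ℕ) : ℝ) * (C₀ * (N : ℝ) ^ ε) := by
        apply mul_le_mul_of_nonneg_right _ (by positivity)
        exact_mod_cast hAcard
    _ ≤ 3 * (1 + (m : ℝ)) * (C₀ * (N : ℝ) ^ ε) := by
        apply mul_le_mul_of_nonneg_right _ (by positivity)
        push_cast
        exact hbox
    _ ≤ 3 * (1 + |(Δ : ℝ)|) * (C₀ * (N : ℝ) ^ ε) := by
        apply mul_le_mul_of_nonneg_right _ (by positivity)
        linarith
    _ = 3 * C₀ * (N : ℝ) ^ ε * (1 + |(Δ : ℝ)|) := by ring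
end
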